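/- arXiv:math/0607345 — 5 statements merged into one kernel-verified Lean document; each statement's English description precedes it below -/
import Mathlib

section
/- For every α ∈ (1,2], c > 0, a > 0 and t > 0, the number variance saturates: lim_{L→∞} V_t^{α,c,a}[L] = (2/(aπ)) (2tc)^{1/α} Γ(1 − 1/α), where Γ is the Gamma function. -/
open MeasureTheory Filter Set

/-- The averaged number variance of the infinite system of independent symmetric
`α`-stable processes started from the equispaced-averaged configuration. -/
noncomputable def numVar (α c a t L : ℝ) : ℝ :=
  L / a + (2 / Real.pi) * ∫ θ in Set.Ioi (0:ℝ),
    Real.exp (-(2 * c * t * (θ / a) ^ α)) * (Real.cos (L * θ / a) - 1) / θ ^ 2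

namespace NumVarAux

open Real Topology

lemma integrableOn_exp_neg_mul {s : ℝ} (hs : 0 < s) :
    IntegrableOn (fun θ : ℝ => Real.exp (-(s * θ))) (Ioi 0) := by
  simpa [neg_mul] using exp_neg_integrableOn_Ioi 0 hs

lemma integral_exp_neg_mul {s : ℝ} (hs : 0 < s) :
    ∫ θ in Ioi (0:ℝ), Real.exp (-(s * θ)) = 1 / s := by
  have h := integral_comp_mul_left_Ioi (fun x => Real.exp (-x)) 0 hs
  simp only [mul_zero, integral_exp_neg_Ioi, Real.exp_zero, smul_eq_mul, mul_one] at h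
  simpa [one_div] using h

lemma integrableOn_exp_neg_mul_cos {s : ℝ} (hs : 0 < s) :
    IntegrableOn (fun θ : ℝ => Real.exp (-(s * θ)) * Real.cos θ) (Ioi 0) := by
  refine (integrableOn_exp_neg_mul hs).mono' ?_ ?_
  · exact (Continuous.mul (by continuity) Real.continuous_cos).aestronglyMeasurable
  · filter_upwards with θ
    rw [norm_mul, Real.norm_eq_abs, Real.norm_eq_abs, abs_of_pos (Real.exp_pos _)]
    calc Real.exp (-(s*θ)) * |Real.cos θ| ≤ Real.exp (-(s*θ)) * 1 := by
          gcongr; exact abs_cos_le_one θ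
      _ = Real.exp (-(s*θ)) := mul_one _

lemma integral_exp_neg_mul_cos {s : ℝ} (hs : 0 < s) :
    ∫ θ in Ioi (0:ℝ), Real.exp (-(s * θ)) * Real.cos θ = s / (1 + s ^ 2) := by
  have hden : (1 : ℝ) + s ^ 2 ≠ 0 := by positivity
  have hderiv : ∀ θ ∈ Ioi (0:ℝ), HasDerivAt
      (fun θ => Real.exp (-(s * θ)) * (Real.sin θ - s * Real.cos θ) / (1 + s ^ 2))
      (Real.exp (-(s * θ)) * Real.cos θ) θ := by
    intro θ _
    have h1 : HasDerivAt (fun θ : ℝ => -(s * θ)) (-s) θ := by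
      simpa using ((hasDerivAt_id θ).const_mul s).fun_neg
    have h2 := h1.exp
    have h3 : HasDerivAt (fun θ : ℝ => Real.sin θ - s * Real.cos θ)
        (Real.cos θ + s * Real.sin θ) θ := by
      simpa [mul_comm, sub_neg_eq_add] using
        (Real.hasDerivAt_sin θ).fun_sub ((Real.hasDerivAt_cos θ).const_mul s)
    have h4 := (h2.fun_mul h3).div_const (1 + s ^ 2)
    refine h4.congr_deriv ?_
    rw [div_eq_iff hden]
    ring
  have htend : Tendsto (fun θ => Real.exp (-(s * θ)) * (Real.sin θ - s * Real.cos θ) / (1 + s ^ 2))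
      atTop (𝓝 0) := by
    have hexp : Tendsto (fun θ : ℝ => Real.exp (-(s * θ))) atTop (𝓝 0) := by
      apply Real.tendsto_exp_neg_atTop_nhds_zero.comp
      exact (tendsto_const_mul_atTop_of_pos hs).mpr tendsto_id
    apply squeeze_zero_norm (a := fun θ => Real.exp (-(s * θ)) * (1 + s) / (1 + s ^ 2))
    · intro θ
      rw [norm_div, norm_mul, Real.norm_eq_abs, Real.norm_eq_abs, Real.norm_eq_abs,
        abs_of_pos (Real.exp_pos _), abs_of_pos (by positivity : (0:ℝ) < 1 + s ^ 2)]
      gcongr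
      have h1 : |Real.sin θ| ≤ 1 := abs_sin_le_one θ
      have h2 : |s * Real.cos θ| ≤ s := by
        rw [abs_mul, abs_of_pos hs]
        calc s * |Real.cos θ| ≤ s * 1 := by gcongr; exact abs_cos_le_one θ
          _ = s := mul_one s
      calc |Real.sin θ - s * Real.cos θ| ≤ |Real.sin θ| + |s * Real.cos θ| := abs_sub _ _
        _ ≤ 1 + s := by linarith
    · simpa using (hexp.mul_const (1 + s)).div_const (1 + s ^ 2)
  have key := integral_Ioi_of_hasDerivAt_of_tendsto (a := 0)
    (by
      have := (hderiv 1 (by norm_num)).continuousAt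
      exact Continuous.continuousWithinAt (by continuity))
    hderiv (integrableOn_exp_neg_mul_cos hs) htend
  rw [key]
  norm_num [Real.exp_zero, neg_div]

lemma integrableOn_exp_neg_mul_one_sub_cos {s : ℝ} (hs : 0 < s) :
    IntegrableOn (fun θ : ℝ => Real.exp (-(s * θ)) * (1 - Real.cos θ)) (Ioi 0) := by
  have h := (integrableOn_exp_neg_mul hs).sub (integrableOn_exp_neg_mul_cos hs)
  simpa [mul_sub, Pi.sub_def] using h

lemma integral_exp_neg_mul_one_sub_cos {s : ℝ} (hs : 0 < s) :
    ∫ θ in Ioi (0:ℝ), Real.exp (-(s * θ)) * (1 - Real.cos θ) = 1 / s - s / (1 + s ^ 2) := by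
  calc ∫ θ in Ioi (0:ℝ), Real.exp (-(s * θ)) * (1 - Real.cos θ)
      = ∫ θ in Ioi (0:ℝ), (Real.exp (-(s * θ)) - Real.exp (-(s * θ)) * Real.cos θ) := by
        congr 1; ext θ; ring
    _ = (∫ θ in Ioi (0:ℝ), Real.exp (-(s * θ))) -
        ∫ θ in Ioi (0:ℝ), Real.exp (-(s * θ)) * Real.cos θ :=
        integral_sub (integrableOn_exp_neg_mul hs) (integrableOn_exp_neg_mul_cos hs)
    _ = 1 / s - s / (1 + s ^ 2) := by
        rw [integral_exp_neg_mul hs, integral_exp_neg_mul_cos hs]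

lemma integrableOn_id_mul_exp {θ : ℝ} (hθ : 0 < θ) :
    IntegrableOn (fun s : ℝ => s * Real.exp (-(θ * s))) (Ioi 0) := by
  have h := integrableOn_rpow_mul_exp_neg_mul_rpow (p := 1) (s := 1) (b := θ)
    (by norm_num) one_pos hθ
  refine h.congr_fun (fun s _ => ?_) measurableSet_Ioi
  beta_reduce
  rw [Real.rpow_one, neg_mul]

lemma integral_id_mul_exp {θ : ℝ} (hθ : 0 < θ) :
    ∫ s in Ioi (0:ℝ), s * Real.exp (-(θ * s)) = (θ ^ 2)⁻¹ := by
  have h := integral_rpow_mul_exp_neg_mul_rpow (p := 1) (q := 1) (b := θ)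
    one_pos (by norm_num) hθ
  calc ∫ s in Ioi (0:ℝ), s * Real.exp (-(θ * s))
      = ∫ s in Ioi (0:ℝ), s ^ (1:ℝ) * Real.exp (-θ * s ^ (1:ℝ)) :=
        setIntegral_congr_fun measurableSet_Ioi
          (fun s _ => by rw [Real.rpow_one, neg_mul])
    _ = θ ^ (-(1 + 1) / 1 : ℝ) * (1 / 1) * Real.Gamma ((1 + 1) / 1) := h
    _ = (θ ^ 2)⁻¹ := by
        rw [show (-(1+1)/1 : ℝ) = -2 by norm_num, show ((1+1)/1 : ℝ) = 2 by norm_num,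
          Real.Gamma_two, Real.rpow_neg hθ.le,
          show (2:ℝ) = ((2:ℕ):ℝ) by norm_num, Real.rpow_natCast]
        norm_num

lemma one_sub_cos_nonneg (θ : ℝ) : (0:ℝ) ≤ 1 - Real.cos θ := by
  nlinarith [Real.cos_le_one θ]

lemma dirichlet_lintegral :
    ∫⁻ θ in Ioi (0:ℝ), ENNReal.ofReal ((1 - Real.cos θ) / θ ^ 2)
      = ENNReal.ofReal (π / 2) := by
  have hmeas : Measurable (Function.uncurry fun θ s : ℝ =>
      ENNReal.ofReal (s * Real.exp (-(θ * s)) * (1 - Real.cos θ))) := by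
    apply Measurable.ennreal_ofReal
    fun_prop
  have step1 : ∫⁻ θ in Ioi (0:ℝ), ENNReal.ofReal ((1 - Real.cos θ) / θ ^ 2)
      = ∫⁻ θ in Ioi (0:ℝ), ∫⁻ s in Ioi (0:ℝ),
          ENNReal.ofReal (s * Real.exp (-(θ * s)) * (1 - Real.cos θ)) := by
    refine setLIntegral_congr_fun measurableSet_Ioi
      (fun θ hθ => ?_)
    have hint : IntegrableOn (fun s : ℝ => s * Real.exp (-(θ * s)) * (1 - Real.cos θ))
        (Ioi 0) := (integrableOn_id_mul_exp hθ).mul_const _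
    have hnn : 0 ≤ᵐ[volume.restrict (Ioi (0:ℝ))]
        fun s : ℝ => s * Real.exp (-(θ * s)) * (1 - Real.cos θ) := by
      filter_upwards [ae_restrict_mem measurableSet_Ioi] with s hs
      exact mul_nonneg (mul_nonneg (le_of_lt hs) (Real.exp_pos _).le)
        (one_sub_cos_nonneg θ)
    rw [← ofReal_integral_eq_lintegral_ofReal hint hnn, integral_mul_const,
      integral_id_mul_exp hθ]
    congr 1
    rw [div_eq_mul_inv, mul_comm]
  have step2 : ∫⁻ θ in Ioi (0:ℝ), ∫⁻ s in Ioi (0:ℝ),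
          ENNReal.ofReal (s * Real.exp (-(θ * s)) * (1 - Real.cos θ))
      = ∫⁻ s in Ioi (0:ℝ), ∫⁻ θ in Ioi (0:ℝ),
          ENNReal.ofReal (s * Real.exp (-(θ * s)) * (1 - Real.cos θ)) :=
    lintegral_lintegral_swap hmeas.aemeasurable
  have step3 : ∫⁻ s in Ioi (0:ℝ), ∫⁻ θ in Ioi (0:ℝ),
          ENNReal.ofReal (s * Real.exp (-(θ * s)) * (1 - Real.cos θ))
      = ∫⁻ s in Ioi (0:ℝ), ENNReal.ofReal ((1 + s ^ 2)⁻¹) := by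
    refine setLIntegral_congr_fun measurableSet_Ioi
      (fun s hs => ?_)
    have hint : IntegrableOn (fun θ : ℝ => s * (Real.exp (-(s * θ)) * (1 - Real.cos θ)))
        (Ioi 0) := (integrableOn_exp_neg_mul_one_sub_cos hs).const_mul s
    have hint' : IntegrableOn (fun θ : ℝ => s * Real.exp (-(θ * s)) * (1 - Real.cos θ))
        (Ioi 0) := by
      refine hint.congr_fun (fun θ _ => ?_) measurableSet_Ioi
      rw [mul_comm θ s]; ring
    have hnn : 0 ≤ᵐ[volume.restrict (Ioi (0:ℝ))]
        fun θ : ℝ => s * Real.exp (-(θ * s)) * (1 - Real.cos θ) :=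
      Filter.Eventually.of_forall fun θ =>
        mul_nonneg (mul_nonneg (le_of_lt hs) (Real.exp_pos _).le) (one_sub_cos_nonneg θ)
    rw [← ofReal_integral_eq_lintegral_ofReal hint' hnn]
    congr 1
    have : ∀ θ : ℝ, s * Real.exp (-(θ * s)) * (1 - Real.cos θ)
        = s * (Real.exp (-(s * θ)) * (1 - Real.cos θ)) := by
      intro θ; rw [mul_comm θ s]; ring
    rw [integral_congr_ae (Filter.Eventually.of_forall this), integral_const_mul,
      integral_exp_neg_mul_one_sub_cos hs]
    have h1 : (1:ℝ) + s ^ 2 ≠ 0 := by positivity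
    have hs0 : (s:ℝ) ≠ 0 := ne_of_gt (mem_Ioi.mp hs)
    field_simp
    ring
  have step4 : ∫⁻ s in Ioi (0:ℝ), ENNReal.ofReal ((1 + s ^ 2)⁻¹)
      = ENNReal.ofReal (π / 2) := by
    rw [← ofReal_integral_eq_lintegral_ofReal integrable_inv_one_add_sq.integrableOn
      (Filter.Eventually.of_forall fun s => by positivity)]
    rw [integral_Ioi_inv_one_add_sq, Real.arctan_zero, sub_zero]
  rw [step1, step2, step3, step4]

lemma dirichlet_integrableOn :
    IntegrableOn (fun θ : ℝ => (1 - Real.cos θ) / θ ^ 2) (Ioi 0) := by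
  constructor
  · exact (Measurable.aestronglyMeasurable (by fun_prop)).restrict
  · rw [hasFiniteIntegral_iff_ofReal (Filter.Eventually.of_forall fun θ => by
      have := one_sub_cos_nonneg θ; positivity)]
    rw [dirichlet_lintegral]
    exact ENNReal.ofReal_lt_top

lemma dirichlet_integral :
    ∫ θ in Ioi (0:ℝ), (1 - Real.cos θ) / θ ^ 2 = π / 2 := by
  have h := ofReal_integral_eq_lintegral_ofReal dirichlet_integrableOn
    (Filter.Eventually.of_forall fun θ => by
      have := one_sub_cos_nonneg θ; positivity)
  rw [dirichlet_lintegral] at h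
  have h2 : (0:ℝ) ≤ ∫ θ in Ioi (0:ℝ), (1 - Real.cos θ) / θ ^ 2 :=
    setIntegral_nonneg measurableSet_Ioi fun θ _ => by
      have := one_sub_cos_nonneg θ; positivity
  exact (ENNReal.ofReal_eq_ofReal_iff h2 (by positivity)).mp h

lemma integrableOn_one_sub_cos_mul {m : ℝ} (hm : 0 < m) :
    IntegrableOn (fun θ : ℝ => (1 - Real.cos (m * θ)) / θ ^ 2) (Ioi 0) := by
  have h0 : IntegrableOn (fun θ : ℝ => (1 - Real.cos (m * θ)) / (m * θ) ^ 2) (Ioi 0) := by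
    have := (integrableOn_Ioi_comp_mul_left_iff
      (fun θ : ℝ => (1 - Real.cos θ) / θ ^ 2) 0 hm).mpr
    simp only [mul_zero] at this
    exact this dirichlet_integrableOn
  have h1 : IntegrableOn (fun θ : ℝ => m ^ 2 * ((1 - Real.cos (m * θ)) / (m * θ) ^ 2)) (Ioi 0) :=
    h0.const_mul (m ^ 2)
  refine IntegrableOn.congr_fun h1 (fun θ hθ => ?_) measurableSet_Ioi
  have hθ0 : θ ≠ 0 := ne_of_gt (mem_Ioi.mp hθ)
  have hm0 : m ≠ 0 := ne_of_gt hm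
  field_simp

lemma integral_one_sub_cos_mul {m : ℝ} (hm : 0 < m) :
    ∫ θ in Ioi (0:ℝ), (1 - Real.cos (m * θ)) / θ ^ 2 = π * m / 2 := by
  have hm0 : m ≠ 0 := ne_of_gt hm
  have hcomp := integral_comp_mul_left_Ioi
    (fun θ : ℝ => (1 - Real.cos θ) / θ ^ 2) 0 hm
  simp only [mul_zero, smul_eq_mul] at hcomp
  rw [dirichlet_integral] at hcomp
  calc ∫ θ in Ioi (0:ℝ), (1 - Real.cos (m * θ)) / θ ^ 2
      = ∫ θ in Ioi (0:ℝ), m ^ 2 * ((1 - Real.cos (m * θ)) / (m * θ) ^ 2) := by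
        refine setIntegral_congr_fun measurableSet_Ioi (fun θ hθ => ?_)
        have hθ0 : θ ≠ 0 := ne_of_gt (mem_Ioi.mp hθ)
        field_simp
    _ = m ^ 2 * ∫ θ in Ioi (0:ℝ), (1 - Real.cos (m * θ)) / (m * θ) ^ 2 :=
        integral_const_mul _ _
    _ = m ^ 2 * (m⁻¹ * (π / 2)) := by rw [hcomp]
    _ = π * m / 2 := by field_simp

section g

variable {b α : ℝ}

lemma measurable_g : Measurable (fun θ : ℝ => (1 - Real.exp (-(b * θ ^ α))) / θ ^ 2) := by
  fun_prop

lemma one_sub_exp_le {x : ℝ} (hx : 0 ≤ x) : 1 - Real.exp (-x) ≤ x := by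
  have := Real.add_one_le_exp (-x)
  linarith

lemma one_sub_exp_nonneg {x : ℝ} (hx : 0 ≤ x) : 0 ≤ 1 - Real.exp (-x) := by
  have : Real.exp (-x) ≤ Real.exp 0 := Real.exp_le_exp.mpr (by linarith)
  rw [Real.exp_zero] at this
  linarith

lemma integrableOn_g (hb : 0 < b) (hα : 1 < α) :
    IntegrableOn (fun θ : ℝ => (1 - Real.exp (-(b * θ ^ α))) / θ ^ 2) (Ioi 0) := by
  have hmeas := measurable_g (b := b) (α := α)
  have h1 : IntegrableOn (fun θ : ℝ => (1 - Real.exp (-(b * θ ^ α))) / θ ^ 2) (Ioc 0 1) := by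
    have hbnd : IntegrableOn (fun θ : ℝ => b * θ ^ (α - 2)) (Ioc 0 1) := by
      have : IntervalIntegrable (fun θ : ℝ => θ ^ (α - 2)) volume 0 1 :=
        intervalIntegral.intervalIntegrable_rpow' (by linarith)
      rw [intervalIntegrable_iff_integrableOn_Ioc_of_le zero_le_one] at this
      exact this.const_mul b
    refine hbnd.mono' hmeas.aestronglyMeasurable.restrict ?_
    filter_upwards [ae_restrict_mem measurableSet_Ioc] with θ hθ
    obtain ⟨hθ0, hθ1⟩ := hθ
    have hθα : (0:ℝ) ≤ b * θ ^ α := by positivity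
    rw [Real.norm_eq_abs, abs_of_nonneg (div_nonneg (one_sub_exp_nonneg hθα) (by positivity))]
    rw [div_le_iff₀ (by positivity : (0:ℝ) < θ ^ 2)]
    calc 1 - Real.exp (-(b * θ ^ α)) ≤ b * θ ^ α := one_sub_exp_le hθα
      _ = b * θ ^ (α - 2) * θ ^ 2 := by
          rw [mul_assoc, ← Real.rpow_natCast θ 2, ← Real.rpow_add hθ0]
          norm_num
  have h2 : IntegrableOn (fun θ : ℝ => (1 - Real.exp (-(b * θ ^ α))) / θ ^ 2) (Ioi 1) := by
    have hbnd : IntegrableOn (fun θ : ℝ => θ ^ (-2 : ℝ)) (Ioi 1) :=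
      integrableOn_Ioi_rpow_of_lt (by norm_num) one_pos
    refine hbnd.mono' hmeas.aestronglyMeasurable.restrict ?_
    filter_upwards [ae_restrict_mem measurableSet_Ioi] with θ hθ
    have hθ0 : (0:ℝ) < θ := lt_trans one_pos (mem_Ioi.mp hθ)
    have hθα : (0:ℝ) ≤ b * θ ^ α := by positivity
    rw [Real.norm_eq_abs, abs_of_nonneg (div_nonneg (one_sub_exp_nonneg hθα) (by positivity)),
      Real.rpow_neg hθ0.le, ← Real.rpow_natCast θ 2]
    norm_num
    rw [div_le_iff₀ (by positivity : (0:ℝ) < θ ^ 2),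
      inv_mul_cancel₀ (by positivity : (θ:ℝ) ^ 2 ≠ 0)]
    have := Real.exp_pos (-(b * θ ^ α))
    linarith
  have := h1.union h2
  rwa [Ioc_union_Ioi_eq_Ioi zero_le_one] at this


lemma integrableOn_rpow_exp (hb : 0 < b) (hα : 1 < α) :
    IntegrableOn (fun θ : ℝ => b * α * (θ ^ (α - 2) * Real.exp (-(b * θ ^ α)))) (Ioi 0) := by
  have h := integrableOn_rpow_mul_exp_neg_mul_rpow (p := α) (s := α - 2) (b := b)
    (by linarith) (by linarith) hb
  have h2 : IntegrableOn (fun θ : ℝ => b * α * (θ ^ (α - 2) * Real.exp (-b * θ ^ α)))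
      (Ioi 0) := by
    have := h.const_mul (b * α)
    exact this
  refine IntegrableOn.congr_fun h2 (fun θ _ => by rw [neg_mul]) measurableSet_Ioi

lemma integral_g (hb : 0 < b) (hα : 1 < α) :
    ∫ θ in Ioi (0:ℝ), (1 - Real.exp (-(b * θ ^ α))) / θ ^ 2
      = b ^ (1 / α) * Real.Gamma (1 - 1 / α) := by
  have hα0 : α ≠ 0 := by positivity
  set F : ℝ → ℝ := fun θ => if θ ≤ 0 then 0 else -((1 - Real.exp (-(b * θ ^ α))) / θ) with hF
  set f' : ℝ → ℝ := fun θ => (1 - Real.exp (-(b * θ ^ α))) / θ ^ 2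
      - b * α * (θ ^ (α - 2) * Real.exp (-(b * θ ^ α))) with hf'
  have hderiv : ∀ θ ∈ Ioi (0:ℝ), HasDerivAt F (f' θ) θ := by
    intro θ hθ
    have hθ0 : (0:ℝ) < θ := hθ
    have h1 : HasDerivAt (fun θ : ℝ => θ ^ α) (α * θ ^ (α - 1)) θ :=
      Real.hasDerivAt_rpow_const (Or.inl hθ0.ne')
    have h2 : HasDerivAt (fun θ : ℝ => -(b * θ ^ α)) (-(b * (α * θ ^ (α - 1)))) θ :=
      (h1.const_mul b).neg
    have h4 : HasDerivAt (fun θ : ℝ => 1 - Real.exp (-(b * θ ^ α)))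
        (Real.exp (-(b * θ ^ α)) * (b * (α * θ ^ (α - 1)))) θ := by
      have := ((hasDerivAt_const θ (1:ℝ)).fun_sub h2.exp)
      simpa using this
    have h6 := (h4.fun_div (hasDerivAt_id θ) hθ0.ne').fun_neg
    have h7 : HasDerivAt F (-((Real.exp (-(b * θ ^ α)) * (b * (α * θ ^ (α - 1))) * θ
        - (1 - Real.exp (-(b * θ ^ α))) * 1) / θ ^ 2)) θ := by
      refine HasDerivAt.congr_of_eventuallyEq (by simpa using h6) ?_
      filter_upwards [Ioi_mem_nhds hθ0] with x hx
      rw [hF]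
      simp only [if_neg (not_le.mpr (mem_Ioi.mp hx))]
    convert h7 using 1
    have hp1 : θ ^ (α - 1) * θ = θ ^ α := by
      nth_rewrite 2 [show θ = θ ^ (1:ℝ) by rw [Real.rpow_one]]
      rw [← Real.rpow_add hθ0]
      norm_num
    have hp2 : θ ^ (α - 2) * θ ^ 2 = θ ^ α := by
      rw [← Real.rpow_natCast θ 2, ← Real.rpow_add hθ0]
      norm_num
    have hD : Real.exp (-(b * θ ^ α)) * (b * (α * θ ^ (α - 1))) * θ
        = θ ^ 2 * (b * α * (θ ^ (α - 2) * Real.exp (-(b * θ ^ α)))) := by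
      calc Real.exp (-(b * θ ^ α)) * (b * (α * θ ^ (α - 1))) * θ
          = b * α * (θ ^ (α - 1) * θ) * Real.exp (-(b * θ ^ α)) := by ring
        _ = b * α * (θ ^ (α - 2) * θ ^ 2) * Real.exp (-(b * θ ^ α)) := by rw [hp1, hp2]
        _ = θ ^ 2 * (b * α * (θ ^ (α - 2) * Real.exp (-(b * θ ^ α)))) := by ring
    rw [hf', hD]
    have hθ2 : (θ:ℝ) ^ 2 ≠ 0 := by positivity
    field_simp
    ring
  have hcont : ContinuousWithinAt F (Ici 0) 0 := by
    have hF0 : F 0 = 0 := by simp [hF]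
    unfold ContinuousWithinAt
    rw [hF0]
    apply squeeze_zero_norm (a := fun θ : ℝ => b * |θ| ^ (α - 1))
    · intro θ
      by_cases h : θ ≤ 0
      · rw [hF]
        simp only [if_pos h, norm_zero]
        positivity
      · push_neg at h
        rw [hF]
        simp only [if_neg (not_le.mpr h)]
        rw [norm_neg, Real.norm_eq_abs, abs_of_pos h,
          abs_of_nonneg (div_nonneg (one_sub_exp_nonneg (by positivity)) h.le)]
        rw [div_le_iff₀ h]
        have hp1 : θ ^ (α - 1) * θ = θ ^ α := by
          nth_rewrite 2 [show θ = θ ^ (1:ℝ) by rw [Real.rpow_one]]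
          rw [← Real.rpow_add h]
          norm_num
        calc 1 - Real.exp (-(b * θ ^ α)) ≤ b * θ ^ α := one_sub_exp_le (by positivity)
          _ = b * θ ^ (α - 1) * θ := by rw [mul_assoc, hp1]
    · have hc : ContinuousAt (fun θ : ℝ => b * |θ| ^ (α - 1)) 0 :=
        continuousAt_const.mul ((continuous_abs.continuousAt).rpow_const (Or.inr (by linarith)))
      have h2 : Tendsto (fun θ : ℝ => b * |θ| ^ (α - 1)) (𝓝[Ici 0] 0) (𝓝 (b * |(0:ℝ)| ^ (α - 1))) :=
        hc.tendsto.mono_left (nhdsWithin_le_nhds (s := Ici 0))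
      simpa [Real.zero_rpow (show α - 1 ≠ 0 by linarith)] using h2
  have htop : Tendsto F atTop (𝓝 0) := by
    apply squeeze_zero_norm' (a := fun θ : ℝ => θ⁻¹)
    · filter_upwards [eventually_gt_atTop (0:ℝ)] with θ hθ
      rw [hF]
      simp only [if_neg (not_le.mpr hθ)]
      rw [norm_neg, Real.norm_eq_abs,
        abs_of_nonneg (div_nonneg (one_sub_exp_nonneg (by positivity)) hθ.le)]
      rw [div_eq_mul_inv]
      have he := Real.exp_pos (-(b * θ ^ α))
      calc (1 - Real.exp (-(b * θ ^ α))) * θ⁻¹ ≤ 1 * θ⁻¹ :=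
            mul_le_mul_of_nonneg_right (by linarith) (inv_nonneg.mpr hθ.le)
        _ = θ⁻¹ := one_mul _
    · exact tendsto_inv_atTop_zero
  have f'int : IntegrableOn f' (Ioi 0) :=
    (integrableOn_g hb hα).sub (integrableOn_rpow_exp hb hα)
  have key := integral_Ioi_of_hasDerivAt_of_tendsto hcont hderiv f'int htop
  have hF0 : F 0 = 0 := by simp [hF]
  rw [hF0, sub_zero] at key
  have hsplit : ∫ θ in Ioi (0:ℝ), f' θ
      = (∫ θ in Ioi (0:ℝ), (1 - Real.exp (-(b * θ ^ α))) / θ ^ 2)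
        - ∫ θ in Ioi (0:ℝ), b * α * (θ ^ (α - 2) * Real.exp (-(b * θ ^ α))) :=
    integral_sub (integrableOn_g hb hα) (integrableOn_rpow_exp hb hα)
  rw [key] at hsplit
  have heq : ∫ θ in Ioi (0:ℝ), (1 - Real.exp (-(b * θ ^ α))) / θ ^ 2
      = ∫ θ in Ioi (0:ℝ), b * α * (θ ^ (α - 2) * Real.exp (-(b * θ ^ α))) := by
    linarith [hsplit]
  rw [heq]
  have hI := integral_rpow_mul_exp_neg_mul_rpow (p := α) (q := α - 2) (b := b)
    (by linarith) (by linarith) hb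
  have hcongr : ∫ θ in Ioi (0:ℝ), b * α * (θ ^ (α - 2) * Real.exp (-(b * θ ^ α)))
      = b * α * ∫ θ in Ioi (0:ℝ), θ ^ (α - 2) * Real.exp (-b * θ ^ α) := by
    rw [← integral_const_mul]
    exact setIntegral_congr_fun measurableSet_Ioi (fun θ _ => by rw [neg_mul])
  rw [hcongr, hI]
  have harg : (α - 2 + 1) / α = 1 - 1 / α := by field_simp; ring
  have hb1 : b * b ^ (-(α - 2 + 1) / α) = b ^ (1 / α) := by
    nth_rewrite 1 [show b = b ^ (1:ℝ) by rw [Real.rpow_one]]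
    rw [← Real.rpow_add hb]
    congr 1
    field_simp
    ring
  rw [harg]
  rw [← hb1]
  field_simp


open FourierTransform in
lemma tendsto_integral_g_cos (hb : 0 < b) (hα : 1 < α) :
    Tendsto (fun m : ℝ => ∫ θ in Ioi (0:ℝ),
      (1 - Real.exp (-(b * θ ^ α))) / θ ^ 2 * Real.cos (m * θ)) atTop (𝓝 0) := by
  set g : ℝ → ℝ := fun θ => (1 - Real.exp (-(b * θ ^ α))) / θ ^ 2 with hgdef
  set G : ℝ → ℂ := (Ioi (0:ℝ)).indicator (fun θ => (g θ : ℂ)) with hG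
  have hGint : Integrable G := by
    rw [hG, integrable_indicator_iff measurableSet_Ioi]
    exact (integrableOn_g hb hα).ofReal
  have h0 := Real.zero_at_infty_fourier G
  have hmap : Tendsto (fun m : ℝ => m / (2 * π)) atTop (cocompact ℝ) := by
    rw [cocompact_eq_atBot_atTop]
    exact (tendsto_id.atTop_div_const (by positivity)).mono_right le_sup_right
  have h1 : Tendsto (fun m : ℝ => 𝓕 G (m / (2 * π))) atTop (𝓝 0) := h0.comp hmap
  have h2 : Tendsto (fun m : ℝ => (𝓕 G (m / (2 * π))).re) atTop (𝓝 0) := by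
    have := (Complex.continuous_re.tendsto 0).comp h1
    exact this
  refine h2.congr (fun m => ?_)
  rw [Real.fourier_real_eq]
  have hint : Integrable (fun v : ℝ => 𝐞 (-(v * (m / (2 * π)))) • G v) := by
    have := (Real.fourierIntegral_convergent_iff (f := G) (m / (2 * π))).2 hGint
    simpa [RCLike.inner_apply, mul_comm] using this
  have h3 := integral_re hint
  simp only [RCLike.re_to_complex] at h3
  rw [← h3]
  have hpt : ∀ v : ℝ, (𝐞 (-(v * (m / (2 * π)))) • G v).re
      = (Ioi (0:ℝ)).indicator (fun θ => g θ * Real.cos (m * θ)) v := by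
    intro v
    rw [hG]
    by_cases hv : v ∈ Ioi (0:ℝ)
    · rw [indicator_of_mem hv, indicator_of_mem hv, Circle.smul_def, Real.fourierChar_apply]
      have harg : 2 * π * -(v * (m / (2 * π))) = -(m * v) := by
        field_simp
      rw [harg, smul_eq_mul, Complex.mul_re, Complex.exp_ofReal_mul_I_re]
      simp [Real.cos_neg, mul_comm]
    · rw [indicator_of_notMem hv, indicator_of_notMem hv, smul_zero, Complex.zero_re]
  rw [integral_congr_ae (Filter.Eventually.of_forall hpt), integral_indicator measurableSet_Ioi]

lemma core (hb : 0 < b) (hα : 1 < α) :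
    Tendsto (fun m : ℝ => m + (2 / π) * ∫ θ in Ioi (0:ℝ),
        Real.exp (-(b * θ ^ α)) * (Real.cos (m * θ) - 1) / θ ^ 2) atTop
      (𝓝 ((2 / π) * b ^ (1 / α) * Real.Gamma (1 - 1 / α))) := by
  have hπ : (0:ℝ) < π := Real.pi_pos
  have hlim : Tendsto (fun m : ℝ => (2 / π) *
      ((∫ θ in Ioi (0:ℝ), (1 - Real.exp (-(b * θ ^ α))) / θ ^ 2)
      - ∫ θ in Ioi (0:ℝ), (1 - Real.exp (-(b * θ ^ α))) / θ ^ 2 * Real.cos (m * θ))) atTop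
      (𝓝 ((2 / π) * b ^ (1 / α) * Real.Gamma (1 - 1 / α))) := by
    have h1 := (tendsto_const_nhds
      (x := ∫ θ in Ioi (0:ℝ), (1 - Real.exp (-(b * θ ^ α))) / θ ^ 2)
      (f := atTop)).sub (tendsto_integral_g_cos hb hα)
    have h2 := h1.const_mul (2 / π)
    rw [sub_zero] at h2
    convert h2 using 2
    rw [integral_g hb hα]
    ring
  refine Tendsto.congr' ?_ hlim
  filter_upwards [eventually_gt_atTop (0:ℝ)] with m hm
  have hgi := integrableOn_g (b := b) (α := α) hb hα
  have hgcos : IntegrableOn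
      (fun θ : ℝ => (1 - Real.exp (-(b * θ ^ α))) / θ ^ 2 * Real.cos (m * θ)) (Ioi 0) := by
    refine hgi.mono' ((measurable_g.mul (by fun_prop)).aestronglyMeasurable).restrict ?_
    filter_upwards [ae_restrict_mem measurableSet_Ioi] with θ hθ
    have hθ0 : (0:ℝ) < θ := hθ
    have hnn : (0:ℝ) ≤ (1 - Real.exp (-(b * θ ^ α))) / θ ^ 2 :=
      div_nonneg (one_sub_exp_nonneg (by positivity)) (by positivity)
    rw [norm_mul, Real.norm_eq_abs, Real.norm_eq_abs, abs_of_nonneg hnn]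
    calc (1 - Real.exp (-(b * θ ^ α))) / θ ^ 2 * |Real.cos (m * θ)|
        ≤ (1 - Real.exp (-(b * θ ^ α))) / θ ^ 2 * 1 := by
          gcongr
          exact abs_cos_le_one _
      _ = (1 - Real.exp (-(b * θ ^ α))) / θ ^ 2 := mul_one _
  have hEcos : IntegrableOn
      (fun θ : ℝ => Real.exp (-(b * θ ^ α)) * (Real.cos (m * θ) - 1) / θ ^ 2) (Ioi 0) := by
    refine (integrableOn_one_sub_cos_mul hm).mono'
      ((by fun_prop : Measurable (fun θ : ℝ =>
        Real.exp (-(b * θ ^ α)) * (Real.cos (m * θ) - 1) / θ ^ 2)).aestronglyMeasurable).restrict ?_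
    filter_upwards [ae_restrict_mem measurableSet_Ioi] with θ hθ
    have hθ0 : (0:ℝ) < θ := hθ
    have hc1 : Real.cos (m * θ) ≤ 1 := Real.cos_le_one _
    have hE1 : Real.exp (-(b * θ ^ α)) ≤ 1 := by
      have hx : (0:ℝ) ≤ b * θ ^ α := by positivity
      have := Real.exp_le_exp.mpr (show -(b * θ ^ α) ≤ 0 by linarith)
      simpa using this
    have h1c : (0:ℝ) ≤ 1 - Real.cos (m * θ) := by linarith
    have habs : |Real.exp (-(b * θ ^ α)) * (Real.cos (m * θ) - 1) / θ ^ 2|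
        = Real.exp (-(b * θ ^ α)) * (1 - Real.cos (m * θ)) / θ ^ 2 := by
      rw [abs_div, abs_mul, abs_of_pos (Real.exp_pos _),
        abs_of_nonneg (by positivity : (0:ℝ) ≤ θ ^ 2), abs_sub_comm,
        abs_of_nonneg h1c]
    rw [Real.norm_eq_abs, habs]
    calc Real.exp (-(b * θ ^ α)) * (1 - Real.cos (m * θ)) / θ ^ 2
        ≤ 1 * (1 - Real.cos (m * θ)) / θ ^ 2 := by
          gcongr
      _ = (1 - Real.cos (m * θ)) / θ ^ 2 := by rw [one_mul]
  have hptw : ∀ θ ∈ Ioi (0:ℝ),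
      (1 - Real.exp (-(b * θ ^ α))) / θ ^ 2
        - (1 - Real.exp (-(b * θ ^ α))) / θ ^ 2 * Real.cos (m * θ)
      = (1 - Real.cos (m * θ)) / θ ^ 2
        + Real.exp (-(b * θ ^ α)) * (Real.cos (m * θ) - 1) / θ ^ 2 := by
    intro θ hθ
    have hθ2 : (θ:ℝ) ^ 2 ≠ 0 := pow_ne_zero 2 (ne_of_gt (mem_Ioi.mp hθ))
    field_simp
    ring
  have hkey : (∫ θ in Ioi (0:ℝ), (1 - Real.exp (-(b * θ ^ α))) / θ ^ 2)
      - (∫ θ in Ioi (0:ℝ), (1 - Real.exp (-(b * θ ^ α))) / θ ^ 2 * Real.cos (m * θ))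
      = π * m / 2 + ∫ θ in Ioi (0:ℝ),
          Real.exp (-(b * θ ^ α)) * (Real.cos (m * θ) - 1) / θ ^ 2 := by
    rw [← integral_sub hgi hgcos, setIntegral_congr_fun measurableSet_Ioi hptw,
      integral_add (integrableOn_one_sub_cos_mul hm) hEcos, integral_one_sub_cos_mul hm]
  rw [hkey]
  field_simp

end g

end NumVarAux

open NumVarAux in
theorem numVar_saturates (α c a t : ℝ) (hα : α ∈ Set.Ioc (1:ℝ) 2)
    (hc : 0 < c) (ha : 0 < a) (ht : 0 < t) :
    Tendsto (fun L => numVar α c a t L) atTop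
      (nhds ((2 / (a * Real.pi)) * (2 * t * c) ^ (1 / α) * Real.Gamma (1 - 1 / α))) := by
  obtain ⟨hα1, hα2⟩ := hα
  have hα0 : α ≠ 0 := (lt_trans one_pos hα1).ne'
  have hπ : (0:ℝ) < Real.pi := Real.pi_pos
  have haα : (0:ℝ) < a ^ α := Real.rpow_pos_of_pos ha α
  set b : ℝ := 2 * c * t / a ^ α with hbdef
  have hb : 0 < b := by positivity
  have hcore := (core hb hα1).comp (tendsto_id.atTop_div_const ha)
  have h1 : b ^ (1 / α) = (2 * t * c) ^ (1 / α) / a := by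
    rw [hbdef, show 2 * c * t = 2 * t * c by ring,
      Real.div_rpow (by positivity) haα.le]
    congr 1
    rw [← Real.rpow_mul ha.le, mul_one_div_cancel hα0, Real.rpow_one]
  have heq : 2 / (a * Real.pi) * (2 * t * c) ^ (1 / α) * Real.Gamma (1 - 1 / α)
      = 2 / Real.pi * b ^ (1 / α) * Real.Gamma (1 - 1 / α) := by
    rw [h1]
    field_simp
  have hrw : ∀ L : ℝ, numVar α c a t L = (L / a) + (2 / Real.pi) * ∫ θ in Ioi (0:ℝ),
      Real.exp (-(b * θ ^ α)) * (Real.cos ((L / a) * θ) - 1) / θ ^ 2 := by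
    intro L
    unfold numVar
    congr 2
    refine setIntegral_congr_fun measurableSet_Ioi (fun θ hθ => ?_)
    have hθ0 : (0:ℝ) < θ := hθ
    rw [Real.div_rpow hθ0.le ha.le,
      show 2 * c * t * (θ ^ α / a ^ α) = b * θ ^ α by rw [hbdef]; ring,
      show L * θ / a = L / a * θ by ring]
  rw [show 2 / (a * Real.pi) * (2 * t * c) ^ (1 / α) * Real.Gamma (1 - 1 / α)
      = 2 / Real.pi * b ^ (1 / α) * Real.Gamma (1 - 1 / α) from heq]
  refine Tendsto.congr' ?_ hcore
  filter_upwards with L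
  simp only [Function.comp_apply, id_eq]
  exact (hrw L).symm
end

section
/- For every α ∈ (0,1], c > 0, a > 0 and t > 0, the number variance diverges: V_t^{α,c,a}[L] → ∞ as L → ∞. -/
open MeasureTheory Filter Set Real Topology


lemma one_sub_cos_nonneg (x : ℝ) : 0 ≤ 1 - Real.cos x := by
  nlinarith [Real.cos_le_one x]

lemma one_sub_cos_le_sq (x : ℝ) : 1 - Real.cos x ≤ x ^ 2 / 2 := by
  nlinarith [Real.one_sub_sq_div_two_le_cos (x := x)]

lemma one_sub_cos_le_two (x : ℝ) : 1 - Real.cos x ≤ 2 := by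
  nlinarith [Real.neg_one_le_cos x]

lemma rpow_neg_two_eq {θ : ℝ} (hθ : 0 < θ) : θ ^ (-2:ℝ) = (θ ^ 2)⁻¹ := by
  rw [show (-2:ℝ) = -(2:ℝ) by norm_num, Real.rpow_neg hθ.le, Real.rpow_two]

lemma meas_aux (b : ℝ) : Measurable (fun θ : ℝ => (1 - Real.cos (b * θ)) / θ ^ 2) := by
  fun_prop

lemma integrableOn_one_sub_cos_div_sq (b : ℝ) :
    IntegrableOn (fun θ : ℝ => (1 - Real.cos (b * θ)) / θ ^ 2) (Ioi 0) := by
  rw [show Ioi (0:ℝ) = Ioc 0 1 ∪ Ioi 1 by rw [Ioc_union_Ioi_eq_Ioi]; norm_num]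
  refine IntegrableOn.union ?_ ?_
  · refine Measure.integrableOn_of_bounded (M := b ^ 2 / 2) (by simp) ((meas_aux b).aestronglyMeasurable) ?_
    filter_upwards [ae_restrict_mem measurableSet_Ioc] with θ hθ
    rw [Real.norm_eq_abs, abs_div, abs_of_nonneg (one_sub_cos_nonneg _), abs_of_nonneg (by positivity)]
    rw [div_le_iff₀ (pow_pos hθ.1 2)]
    calc 1 - Real.cos (b * θ) ≤ (b * θ) ^ 2 / 2 := one_sub_cos_le_sq _
      _ = b ^ 2 / 2 * θ ^ 2 := by ring
  · refine Integrable.mono ((integrableOn_Ioi_rpow_of_lt (a := -2) (by norm_num) one_pos).const_mul 2) ((meas_aux b).aestronglyMeasurable) ?_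
    filter_upwards [ae_restrict_mem measurableSet_Ioi] with θ hθ
    have hθ1 : (1:ℝ) < θ := hθ
    have hθ0 : (0:ℝ) < θ := by linarith
    rw [Real.norm_eq_abs, Real.norm_eq_abs, abs_div, abs_of_nonneg (one_sub_cos_nonneg _),
      abs_of_nonneg (by positivity), abs_of_nonneg (by positivity : (0:ℝ) ≤ 2 * θ ^ (-2:ℝ)),
      rpow_neg_two_eq hθ0, div_le_iff₀ (by positivity)]
    calc 1 - Real.cos (b * θ) ≤ 2 := one_sub_cos_le_two _
      _ = 2 * (θ ^ 2)⁻¹ * θ ^ 2 := by field_simp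

lemma tendsto_linear_mul_exp {θ : ℝ} (hθ : 0 < θ) (c : ℝ) :
    Tendsto (fun s : ℝ => (c * s + 1) * Real.exp (-(s * θ))) atTop (𝓝 0) := by
  have h1 : Tendsto (fun s : ℝ => θ * s) atTop atTop := tendsto_id.const_mul_atTop hθ
  have h2 := (tendsto_pow_mul_exp_neg_atTop_nhds_zero 1).comp h1
  have h3 := tendsto_exp_neg_atTop_nhds_zero.comp h1
  have h4 := (h2.const_mul (c/θ)).add h3
  simp only [Function.comp] at h4
  have : ((c/θ) * 0 + 0 : ℝ) = 0 := by ring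
  rw [this] at h4
  refine h4.congr fun s => ?_
  rw [pow_one]
  have : θ * s * Real.exp (-(θ * s)) = θ * (s * Real.exp (-(s * θ))) := by ring_nf
  rw [this]
  field_simp

lemma integrableOn_mul_exp_neg {θ : ℝ} (hθ : 0 < θ) :
    IntegrableOn (fun s : ℝ => s * Real.exp (-(s * θ))) (Ioi 0) := by
  refine integrable_of_isBigO_exp_neg (b := θ/2) (by positivity) (by fun_prop) ?_
  rw [Asymptotics.isBigO_iff]
  refine ⟨2/θ, ?_⟩
  filter_upwards [eventually_gt_atTop 0] with s hs
  have key : s * Real.exp (-(s * θ)) = (s * Real.exp (-(θ/2) * s)) * Real.exp (-(θ/2) * s) := by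
    rw [mul_assoc, ← Real.exp_add]; ring_nf
  rw [Real.norm_eq_abs, Real.norm_eq_abs, key, abs_mul,
    abs_of_nonneg (Real.exp_nonneg _), abs_of_nonneg (by positivity)]
  gcongr
  -- s * exp (-(θ/2) * s) ≤ 2/θ  : since x e^{-x} ≤ 1
  have h1 : (θ/2) * s * Real.exp (-((θ/2) * s)) ≤ 1 := by
    set x := (θ/2) * s with hxdef
    have hxe : x ≤ Real.exp x := by nlinarith [Real.add_one_le_exp x]
    have hx : 0 ≤ x := by positivity
    rw [Real.exp_neg, ← div_eq_mul_inv, div_le_one (Real.exp_pos _)]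
    exact hxe
  have h2 : s * Real.exp (-(θ/2) * s) = (2/θ) * ((θ/2) * s * Real.exp (-((θ/2) * s))) := by
    field_simp
  rw [h2]
  calc (2/θ) * ((θ/2) * s * Real.exp (-((θ/2) * s))) ≤ (2/θ) * 1 := by
        have : 0 < 2/θ := by positivity
        nlinarith
    _ = 2/θ := mul_one _

lemma integral_mul_exp_neg {θ : ℝ} (hθ : 0 < θ) :
    ∫ s in Ioi (0:ℝ), s * Real.exp (-(s * θ)) = (θ ^ 2)⁻¹ := by
  have key := integral_Ioi_of_hasDerivAt_of_tendsto
    (f := fun s => -((s * θ + 1) * Real.exp (-(s * θ))) / θ ^ 2)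
    (f' := fun s => s * Real.exp (-(s * θ))) (a := 0)
    (m := 0) ?_ ?_ (integrableOn_mul_exp_neg hθ) ?_
  · rw [key]; field_simp; simp
  · apply Continuous.continuousWithinAt
    have : Continuous fun s : ℝ => -((s * θ + 1) * Real.exp (-(s * θ))) / θ ^ 2 := by
      continuity
    exact this
  · intro s hs
    have h1 : HasDerivAt (fun s : ℝ => s * θ + 1) θ s := by
      simpa using ((hasDerivAt_id s).mul_const θ).add_const 1
    have h2 : HasDerivAt (fun s : ℝ => Real.exp (-(s * θ))) (Real.exp (-(s * θ)) * (-θ)) s := by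
      have : HasDerivAt (fun s : ℝ => -(s * θ)) (-θ) s := by
        simpa using ((hasDerivAt_id s).mul_const θ).fun_neg
      exact this.exp
    have h3 := ((h1.mul h2).neg).div_const (θ ^ 2)
    refine h3.congr_deriv ?_
    field_simp
    ring
  · have h := (tendsto_linear_mul_exp hθ θ).neg.div_const (θ ^ 2)
    have h0 : (-(0:ℝ) / θ ^ 2) = 0 := by simp
    rw [h0] at h
    exact h.congr fun s => by ring_nf

lemma integrableOn_exp_one_sub_cos {s : ℝ} (hs : 0 < s) (b : ℝ) :
    IntegrableOn (fun θ : ℝ => Real.exp (-(s * θ)) * (1 - Real.cos (b * θ))) (Ioi 0) := by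
  refine Integrable.mono ((exp_neg_integrableOn_Ioi 0 hs).const_mul 2) ?_ ?_
  · apply Measurable.aestronglyMeasurable; fun_prop
  · filter_upwards [] with θ
    rw [Real.norm_eq_abs, Real.norm_eq_abs, abs_mul, abs_of_nonneg (Real.exp_nonneg _),
      abs_of_nonneg (by nlinarith [Real.cos_le_one (b*θ)] : (0:ℝ) ≤ 1 - Real.cos (b*θ)),
      abs_of_nonneg (by positivity : (0:ℝ) ≤ 2 * Real.exp (-s * θ))]
    have h2 : 1 - Real.cos (b * θ) ≤ 2 := by nlinarith [Real.neg_one_le_cos (b*θ)]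
    have : Real.exp (-(s * θ)) = Real.exp (-s * θ) := by ring_nf
    rw [this]
    nlinarith [Real.exp_pos (-s * θ)]

lemma integral_exp_one_sub_cos {s : ℝ} (hs : 0 < s) (b : ℝ) :
    ∫ θ in Ioi (0:ℝ), Real.exp (-(s * θ)) * (1 - Real.cos (b * θ))
      = b ^ 2 / (s * (s ^ 2 + b ^ 2)) := by
  have hD : (0:ℝ) < s ^ 2 + b ^ 2 := by positivity
  set H : ℝ → ℝ := fun θ => -Real.exp (-(s * θ)) / s
    + Real.exp (-(s * θ)) * (s * Real.cos (b * θ) - b * Real.sin (b * θ)) / (s ^ 2 + b ^ 2) with hH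
  have key := integral_Ioi_of_hasDerivAt_of_tendsto (f := H)
    (f' := fun θ => Real.exp (-(s * θ)) * (1 - Real.cos (b * θ))) (a := 0) (m := 0)
    ?_ ?_ (integrableOn_exp_one_sub_cos hs b) ?_
  · rw [key, hH]
    simp only [mul_zero, neg_zero, Real.exp_zero, Real.cos_zero, Real.sin_zero]
    field_simp
    ring
  · apply Continuous.continuousWithinAt
    have : Continuous H := by rw [hH]; continuity
    exact this
  · intro θ _
    have hE : HasDerivAt (fun θ : ℝ => Real.exp (-(s * θ))) (Real.exp (-(s * θ)) * (-s)) θ := by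
      have : HasDerivAt (fun θ : ℝ => -(s * θ)) (-s) θ := by
        simpa using ((hasDerivAt_id θ).const_mul s).fun_neg
      exact this.exp
    have hB : HasDerivAt (fun θ : ℝ => b * θ) b θ := by
      simpa using (hasDerivAt_id θ).const_mul b
    have hC : HasDerivAt (fun θ : ℝ => Real.cos (b * θ)) (-Real.sin (b * θ) * b) θ := hB.cos
    have hS : HasDerivAt (fun θ : ℝ => Real.sin (b * θ)) (Real.cos (b * θ) * b) θ := hB.sin
    have h1 := (hE.neg).div_const s
    have h2 := ((hC.const_mul s).sub (hS.const_mul b))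
    have h3 := ((hE.mul h2).div_const (s ^ 2 + b ^ 2))
    have h4 := h1.add h3
    refine h4.congr_deriv ?_
    simp only [Pi.sub_apply]
    field_simp
    ring
  · have hb : Tendsto (fun θ : ℝ => (1/s + (s + |b|)/(s^2+b^2)) * Real.exp (-(s * θ))) atTop (𝓝 0) := by
      have h1 : Tendsto (fun θ : ℝ => s * θ) atTop atTop := tendsto_id.const_mul_atTop hs
      have h2 := (tendsto_exp_neg_atTop_nhds_zero.comp h1).const_mul (1/s + (s + |b|)/(s^2+b^2))
      simp only [Function.comp] at h2
      simpa using h2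
    refine squeeze_zero_norm (fun θ => ?_) hb
    · rw [hH]
      have e0 := Real.exp_nonneg (-(s * θ))
      calc ‖-Real.exp (-(s * θ)) / s + Real.exp (-(s * θ)) * (s * Real.cos (b * θ) - b * Real.sin (b * θ)) / (s ^ 2 + b ^ 2)‖
          ≤ ‖-Real.exp (-(s * θ)) / s‖ + ‖Real.exp (-(s * θ)) * (s * Real.cos (b * θ) - b * Real.sin (b * θ)) / (s ^ 2 + b ^ 2)‖ := norm_add_le _ _
        _ ≤ Real.exp (-(s * θ)) / s + Real.exp (-(s * θ)) * (s + |b|) / (s ^ 2 + b ^ 2) := by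
            rw [Real.norm_eq_abs, Real.norm_eq_abs, abs_div, abs_neg, abs_of_nonneg e0,
              abs_of_nonneg hs.le, abs_div, abs_of_nonneg hD.le, abs_mul, abs_of_nonneg e0]
            gcongr
            calc |s * Real.cos (b * θ) - b * Real.sin (b * θ)|
                ≤ |s * Real.cos (b * θ)| + |b * Real.sin (b * θ)| := abs_sub _ _
              _ ≤ s + |b| := by
                  rw [abs_mul, abs_mul, abs_of_nonneg hs.le]
                  have := Real.abs_cos_le_one (b * θ)
                  have := Real.abs_sin_le_one (b * θ)
                  nlinarith [abs_nonneg b, abs_nonneg (Real.sin (b*θ)), abs_nonneg (Real.cos (b*θ))]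
        _ = (1/s + (s + |b|)/(s^2+b^2)) * Real.exp (-(s * θ)) := by ring


lemma integrableOn_inv_sq_add_sq {b : ℝ} (hb : 0 < b) :
    IntegrableOn (fun s : ℝ => b ^ 2 / (s ^ 2 + b ^ 2)) (Ioi 0) := by
  set C := max 1 (b ^ 2)⁻¹ with hC
  have hC1 : (1:ℝ) ≤ C := le_max_left _ _
  have hC2 : (1:ℝ) ≤ C * b ^ 2 := by
    rw [hC]
    rcases le_total 1 ((b^2)⁻¹) with h | h
    · rw [max_eq_right h]; field_simp; exact le_refl _
    · rw [max_eq_left h]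
      have hb2 : (0:ℝ) < b ^ 2 := by positivity
      nlinarith [mul_le_mul_of_nonneg_right h hb2.le, inv_mul_cancel₀ (ne_of_gt hb2)]
  refine Integrable.mono ((integrable_inv_one_add_sq.const_mul (b ^ 2 * C)).integrableOn) ?_ ?_
  · apply Measurable.aestronglyMeasurable; fun_prop
  · filter_upwards [] with s
    have h1 : (0:ℝ) < s ^ 2 + b ^ 2 := by positivity
    have h2 : (0:ℝ) < 1 + s ^ 2 := by positivity
    rw [Real.norm_eq_abs, Real.norm_eq_abs, abs_of_nonneg (by positivity), abs_of_nonneg (by positivity)]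
    have he : b ^ 2 * C * (1 + s ^ 2)⁻¹ = (b ^ 2 * C) / (1 + s ^ 2) := by ring
    rw [he, div_le_div_iff₀ h1 h2]
    have h3 : 1 ≤ C * (s ^ 2 + b ^ 2) - s ^ 2 := by nlinarith [sq_nonneg s, sq_nonneg b]
    nlinarith [sq_nonneg b, sq_nonneg s, sq_nonneg (b*s)]

lemma integral_inv_sq_add_sq' {b : ℝ} (hb : 0 < b) :
    ∫ s in Ioi (0:ℝ), b ^ 2 / (s ^ 2 + b ^ 2) = Real.pi * b / 2 := by
  have h1 : ∀ s : ℝ, b ^ 2 / (s ^ 2 + b ^ 2) = (1 + (b⁻¹ * s) ^ 2)⁻¹ := by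
    intro s
    have h2 : (0:ℝ) < s ^ 2 + b ^ 2 := by positivity
    field_simp
    ring
  simp_rw [h1]
  have key := integral_comp_mul_left_Ioi (g := fun x : ℝ => (1 + x ^ 2)⁻¹) 0 (inv_pos.mpr hb)
  simp only [mul_zero] at key
  rw [key, integral_Ioi_inv_one_add_sq]
  simp [Real.arctan_zero]
  field_simp

lemma integral_one_sub_cos_div_sq {b : ℝ} (hb : 0 < b) :
    ∫ θ in Ioi (0:ℝ), (1 - Real.cos (b * θ)) / θ ^ 2 = Real.pi * b / 2 := by
  set f : ℝ → ℝ → ENNReal := fun θ s =>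
    ENNReal.ofReal (s * Real.exp (-(s * θ)) * (1 - Real.cos (b * θ))) with hf
  have hmeas : AEMeasurable (Function.uncurry f)
      ((volume.restrict (Ioi (0:ℝ))).prod (volume.restrict (Ioi (0:ℝ)))) := by
    apply Measurable.aemeasurable
    apply ENNReal.measurable_ofReal.comp
    fun_prop
  have swap := lintegral_lintegral_swap hmeas
  -- inner over s, for θ > 0
  have hA : ∀ θ ∈ Ioi (0:ℝ), ∫⁻ s in Ioi (0:ℝ), f θ s
      = ENNReal.ofReal ((1 - Real.cos (b * θ)) / θ ^ 2) := by
    intro θ hθ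
    have hθ0 : (0:ℝ) < θ := hθ
    have hc : 0 ≤ 1 - Real.cos (b * θ) := one_sub_cos_nonneg _
    have step1 : ∀ s : ℝ, f θ s
        = ENNReal.ofReal (s * Real.exp (-(s * θ))) * ENNReal.ofReal (1 - Real.cos (b * θ)) := by
      intro s
      simp only [hf]
      rw [ENNReal.ofReal_mul' hc]
    simp_rw [step1]
    rw [lintegral_mul_const' _ _ (by simp)]
    rw [← ofReal_integral_eq_lintegral_ofReal ((integrableOn_mul_exp_neg hθ0))
      (by filter_upwards [ae_restrict_mem measurableSet_Ioi] with s hs;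
          have : (0:ℝ) < s := hs; positivity)]
    rw [integral_mul_exp_neg hθ0, ← ENNReal.ofReal_mul (by positivity)]
    rw [div_eq_mul_inv, mul_comm]
  -- inner over θ, for s > 0
  have hB : ∀ s ∈ Ioi (0:ℝ), ∫⁻ θ in Ioi (0:ℝ), f θ s
      = ENNReal.ofReal (b ^ 2 / (s ^ 2 + b ^ 2)) := by
    intro s hs
    have hs0 : (0:ℝ) < s := hs
    have step1 : ∀ θ : ℝ, f θ s
        = ENNReal.ofReal s * ENNReal.ofReal (Real.exp (-(s * θ)) * (1 - Real.cos (b * θ))) := by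
      intro θ
      simp only [hf]
      rw [← ENNReal.ofReal_mul hs0.le, ← mul_assoc]
    simp_rw [step1]
    rw [lintegral_const_mul' _ _ (by simp)]
    rw [← ofReal_integral_eq_lintegral_ofReal (integrableOn_exp_one_sub_cos hs0 b)
      (by filter_upwards [] with θ;
          exact mul_nonneg (Real.exp_nonneg _) (one_sub_cos_nonneg _))]
    rw [integral_exp_one_sub_cos hs0 b, ← ENNReal.ofReal_mul hs0.le]
    congr 1
    have h1 : (0:ℝ) < s ^ 2 + b ^ 2 := by positivity
    field_simp
  rw [setLIntegral_congr_fun measurableSet_Ioi hA,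
      setLIntegral_congr_fun measurableSet_Ioi hB] at swap
  -- convert both sides
  have hL : ∫⁻ θ in Ioi (0:ℝ), ENNReal.ofReal ((1 - Real.cos (b * θ)) / θ ^ 2)
      = ENNReal.ofReal (∫ θ in Ioi (0:ℝ), (1 - Real.cos (b * θ)) / θ ^ 2) := by
    rw [ofReal_integral_eq_lintegral_ofReal (integrableOn_one_sub_cos_div_sq b)
      (by filter_upwards [ae_restrict_mem measurableSet_Ioi] with θ hθ;
          have : (0:ℝ) < θ := hθ
          have := one_sub_cos_nonneg (b * θ)
          positivity)]
  have hR : ∫⁻ s in Ioi (0:ℝ), ENNReal.ofReal (b ^ 2 / (s ^ 2 + b ^ 2))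
      = ENNReal.ofReal (Real.pi * b / 2) := by
    rw [← ofReal_integral_eq_lintegral_ofReal (integrableOn_inv_sq_add_sq hb)
      (by filter_upwards [] with s; positivity), integral_inv_sq_add_sq' hb]
  rw [hL, hR] at swap
  have hint : 0 ≤ ∫ θ in Ioi (0:ℝ), (1 - Real.cos (b * θ)) / θ ^ 2 := by
    apply setIntegral_nonneg measurableSet_Ioi
    intro θ hθ
    have : (0:ℝ) < θ := hθ
    have := one_sub_cos_nonneg (b * θ)
    positivity
  have hpb : 0 ≤ Real.pi * b / 2 := by positivity
  exact (ENNReal.ofReal_eq_ofReal_iff hint hpb).mp swap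

lemma tendsto_cos_integral_zero {δ : ℝ} (hδ : 0 < δ) :
    Tendsto (fun b : ℝ => ∫ θ in Ioc δ (1:ℝ), Real.cos (b * θ) / θ) atTop (𝓝 0) := by
  classical
  set f : ℝ → ℂ := fun v => Set.indicator (Ioc δ (1:ℝ)) (fun v => ((v:ℂ))⁻¹) v with hfdef
  have hRL := Real.tendsto_integral_exp_smul_cocompact f
  have hmap : Tendsto (fun b : ℝ => -b / (2 * Real.pi)) atTop (cocompact ℝ) := by
    rw [cocompact_eq_atBot_atTop]
    refine Tendsto.mono_right ?_ le_sup_left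
    apply Tendsto.atBot_div_const (by positivity)
    exact tendsto_neg_atTop_atBot
  have hcomp := hRL.comp hmap
  -- identify the composed function's real part with our integral
  have hre := (Complex.continuous_re.tendsto 0).comp hcomp
  simp only [Function.comp, Complex.zero_re] at hre
  refine hre.congr fun b => ?_
  simp only [Function.comp_apply]
  -- ∫ v, 𝐞 (-(v * (-b/(2π)))) • f v, real part = ∫ θ in Ioc δ 1, cos (b θ)/θ
  have hπ : Real.pi ≠ 0 := Real.pi_ne_zero
  have h1 : ∀ v : ℝ, Real.fourierChar (-(v * (-b / (2 * Real.pi)))) • f v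
      = Set.indicator (Ioc δ (1:ℝ)) (fun v => Complex.exp ((b * v : ℝ) * Complex.I) * ((v:ℂ))⁻¹) v := by
    intro v
    by_cases hv : v ∈ Ioc δ (1:ℝ)
    · simp only [hfdef, Set.indicator_of_mem hv, Circle.smul_def, Real.fourierChar_apply]
      congr 2
      have hπc : (Real.pi : ℂ) ≠ 0 := by exact_mod_cast hπ
      push_cast
      field_simp
    · simp only [hfdef, Set.indicator_of_notMem hv, smul_zero]
  have heq : (∫ v : ℝ, Real.fourierChar (-(v * (-b / (2 * Real.pi)))) • f v)
      = ∫ v in Ioc δ (1:ℝ), Complex.exp ((b * v : ℝ) * Complex.I) * ((v:ℂ))⁻¹ := by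
    rw [← integral_indicator measurableSet_Ioc]
    exact integral_congr_ae (ae_of_all _ h1)
  rw [heq]
  -- now take real part inside
  have hint : IntegrableOn (fun v : ℝ => Complex.exp ((b * v : ℝ) * Complex.I) * ((v:ℂ))⁻¹) (Ioc δ 1) := by
    refine Measure.integrableOn_of_bounded (M := δ⁻¹) (by simp) ?_ ?_
    · apply Measurable.aestronglyMeasurable
      fun_prop
    · filter_upwards [ae_restrict_mem measurableSet_Ioc] with v hv
      have hv0 : 0 < v := lt_of_lt_of_le hδ hv.1.le
      rw [norm_mul]
      have h2 : ‖Complex.exp ((b * v : ℝ) * Complex.I)‖ = 1 := by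
        rw [Complex.norm_exp_ofReal_mul_I]
      rw [h2, one_mul]
      rw [norm_inv, Complex.norm_real, Real.norm_eq_abs, abs_of_pos hv0]
      exact inv_anti₀ hδ hv.1.le
  rw [show (∫ v in Ioc δ (1:ℝ), Complex.exp ((b * v : ℝ) * Complex.I) * ((v:ℂ))⁻¹).re
      = ∫ v in Ioc δ (1:ℝ), (Complex.exp ((b * v : ℝ) * Complex.I) * ((v:ℂ))⁻¹).re from
    (integral_re hint).symm]
  apply setIntegral_congr_fun measurableSet_Ioc
  intro v hv
  have hv0 : 0 < v := lt_of_lt_of_le hδ hv.1.le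
  simp only [Complex.mul_re, Complex.exp_ofReal_mul_I_re, Complex.exp_ofReal_mul_I_im,
    Complex.inv_re, Complex.inv_im, Complex.ofReal_re, Complex.ofReal_im, Complex.normSq_ofReal]
  field_simp
  ring


lemma integrableOn_one_sub_cos_div (b : ℝ) :
    IntegrableOn (fun θ : ℝ => (1 - Real.cos (b * θ)) / θ) (Ioc (0:ℝ) 1) := by
  refine Measure.integrableOn_of_bounded (M := b ^ 2 / 2) (by simp) ?_ ?_
  · apply Measurable.aestronglyMeasurable; fun_prop
  · filter_upwards [ae_restrict_mem measurableSet_Ioc] with θ hθ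
    obtain ⟨hθ0, hθ1⟩ := hθ
    rw [Real.norm_eq_abs, abs_div, abs_of_nonneg (one_sub_cos_nonneg _), abs_of_pos hθ0,
      div_le_iff₀ hθ0]
    calc 1 - Real.cos (b * θ) ≤ (b * θ) ^ 2 / 2 := one_sub_cos_le_sq _
      _ = (b ^ 2 / 2 * θ) * θ := by ring
      _ ≤ (b ^ 2 / 2) * θ := by nlinarith [mul_nonneg (mul_nonneg (by positivity : (0:ℝ) ≤ b^2/2) hθ0.le) (by linarith : (0:ℝ) ≤ 1 - θ)]

lemma tendsto_K_atTop :
    Tendsto (fun b : ℝ => ∫ θ in Ioc (0:ℝ) 1, (1 - Real.cos (b * θ)) / θ) atTop atTop := by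
  rw [tendsto_atTop]
  intro M
  set δ : ℝ := Real.exp (-(|M| + 1)) with hδdef
  have hδ0 : 0 < δ := Real.exp_pos _
  have hδ1 : δ ≤ 1 := by
    rw [hδdef]
    calc Real.exp (-(|M| + 1)) ≤ Real.exp 0 := by
          apply Real.exp_le_exp.mpr
          have := abs_nonneg M
          linarith
      _ = 1 := Real.exp_zero
  -- the inv integral over Ioc δ 1
  have hinv : ∫ θ in Ioc δ (1:ℝ), θ⁻¹ = |M| + 1 := by
    rw [← intervalIntegral.integral_of_le hδ1, integral_inv_of_pos hδ0 one_pos]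
    rw [hδdef, ← Real.exp_zero, ← Real.exp_sub]
    rw [Real.log_exp]
    ring_nf
  have hinvInt : IntegrableOn (fun θ : ℝ => θ⁻¹) (Ioc δ 1) := by
    refine Measure.integrableOn_of_bounded (M := δ⁻¹) (by simp) ?_ ?_
    · apply Measurable.aestronglyMeasurable; fun_prop
    · filter_upwards [ae_restrict_mem measurableSet_Ioc] with θ hθ
      rw [Real.norm_eq_abs, abs_of_pos (inv_pos.mpr (lt_of_lt_of_le hδ0 hθ.1.le))]
      exact inv_anti₀ hδ0 hθ.1.le
  have hcosInt : ∀ b : ℝ, IntegrableOn (fun θ : ℝ => Real.cos (b * θ) / θ) (Ioc δ 1) := by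
    intro b
    refine Measure.integrableOn_of_bounded (M := δ⁻¹) (by simp) ?_ ?_
    · apply Measurable.aestronglyMeasurable; fun_prop
    · filter_upwards [ae_restrict_mem measurableSet_Ioc] with θ hθ
      have hθ0 : 0 < θ := lt_of_lt_of_le hδ0 hθ.1.le
      rw [Real.norm_eq_abs, abs_div, abs_of_pos hθ0, div_le_iff₀ hθ0]
      calc |Real.cos (b * θ)| ≤ 1 := Real.abs_cos_le_one _
        _ ≤ δ⁻¹ * θ := by
            have h5 : δ⁻¹ * δ ≤ δ⁻¹ * θ := mul_le_mul_of_nonneg_left hθ.1.le (inv_pos.mpr hδ0).le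
            rw [inv_mul_cancel₀ hδ0.ne'] at h5
            exact h5
  filter_upwards [(tendsto_cos_integral_zero hδ0).eventually
    (eventually_le_nhds (show (0:ℝ) < 1 by norm_num) : ∀ᶠ x in 𝓝 (0:ℝ), x ≤ 1),
    (tendsto_cos_integral_zero hδ0).eventually
    (eventually_ge_nhds (show (-1:ℝ) < 0 by norm_num) : ∀ᶠ x in 𝓝 (0:ℝ), -1 ≤ x)] with b hb1 hb2
  have key : ∫ θ in Ioc δ (1:ℝ), (1 - Real.cos (b * θ)) / θ
      = (|M| + 1) - ∫ θ in Ioc δ (1:ℝ), Real.cos (b * θ) / θ := by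
    rw [← hinv, ← integral_sub hinvInt (hcosInt b)]
    apply setIntegral_congr_fun measurableSet_Ioc
    intro θ hθ
    have hθ0 : 0 < θ := lt_of_lt_of_le hδ0 hθ.1.le
    field_simp
  have hmono : ∫ θ in Ioc δ (1:ℝ), (1 - Real.cos (b * θ)) / θ
      ≤ ∫ θ in Ioc (0:ℝ) 1, (1 - Real.cos (b * θ)) / θ := by
    apply setIntegral_mono_set (integrableOn_one_sub_cos_div b)
    · filter_upwards [ae_restrict_mem measurableSet_Ioc] with θ hθ
      have hθ0 : (0:ℝ) < θ := hθ.1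
      have := one_sub_cos_nonneg (b * θ)
      positivity
    · apply HasSubset.Subset.eventuallyLE
      exact Ioc_subset_Ioc hδ0.le le_rfl
  have : M ≤ (|M| + 1) - ∫ θ in Ioc δ (1:ℝ), Real.cos (b * θ) / θ := by
    have hM : M ≤ |M| := le_abs_self M
    linarith
  linarith [key ▸ this, hmono]

lemma one_sub_exp_bound {β u : ℝ} (hβ : 0 < β) (hu0 : 0 ≤ u) (hu1 : u ≤ 1) :
    (1 - Real.exp (-β)) * u ≤ 1 - Real.exp (-(β * u)) := by
  have hconv := convexOn_exp.2 (mem_univ (0:ℝ)) (mem_univ (-β))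
    (by linarith : (0:ℝ) ≤ 1 - u) hu0 (by ring)
  simp only [smul_eq_mul, mul_zero, zero_add, Real.exp_zero, mul_one] at hconv
  have h2 : u * -β = -(β * u) := by ring
  rw [h2] at hconv
  linarith

theorem numVar_diverges (α c a t : ℝ) (hα : α ∈ Set.Ioc (0:ℝ) 1)
    (hc : 0 < c) (ha : 0 < a) (ht : 0 < t) :
    Tendsto (fun L => numVar α c a t L) atTop atTop := by
  obtain ⟨hα0, hα1⟩ := hα
  have haα : (0:ℝ) < a ^ α := Real.rpow_pos_of_pos ha α
  set β : ℝ := 2 * c * t / a ^ α with hβdef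
  have hβ : 0 < β := by positivity
  set κ : ℝ := 1 - Real.exp (-β) with hκdef
  have hκ : 0 < κ := by
    have : Real.exp (-β) < 1 := by
      rw [← Real.exp_zero]
      exact Real.exp_lt_exp.mpr (by linarith)
    linarith
  have hπ : (0:ℝ) < Real.pi := Real.pi_pos
  -- the target lower bound tendsto
  have hK : Tendsto (fun L : ℝ =>
      (2 / Real.pi) * κ * ∫ θ in Ioc (0:ℝ) 1, (1 - Real.cos (L / a * θ)) / θ) atTop atTop := by
    apply Tendsto.const_mul_atTop (by positivity)
    exact tendsto_K_atTop.comp (Tendsto.atTop_div_const ha tendsto_id)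
  apply tendsto_atTop_mono' atTop _ hK
  filter_upwards [eventually_gt_atTop (0:ℝ)] with L hL
  set b : ℝ := L / a with hbdef
  have hb : 0 < b := by positivity
  -- rewrite numVar integrand
  set g1 : ℝ → ℝ := fun θ => (1 - Real.cos (b * θ)) / θ ^ 2 with hg1
  set g2 : ℝ → ℝ := fun θ => Real.exp (-(β * θ ^ α)) * (Real.cos (b * θ) - 1) / θ ^ 2 with hg2
  set g3 : ℝ → ℝ := fun θ => (1 - Real.exp (-(β * θ ^ α))) * (1 - Real.cos (b * θ)) / θ ^ 2 with hg3
  have hg1int : IntegrableOn g1 (Ioi 0) := integrableOn_one_sub_cos_div_sq b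
  have hg2meas : Measurable g2 := by rw [hg2]; fun_prop
  have hg2int : IntegrableOn g2 (Ioi 0) := by
    refine Integrable.mono hg1int hg2meas.aestronglyMeasurable ?_
    filter_upwards [ae_restrict_mem measurableSet_Ioi] with θ hθ
    have hθ0 : (0:ℝ) < θ := hθ
    have hc1 := one_sub_cos_nonneg (b * θ)
    rw [hg2, hg1, Real.norm_eq_abs, Real.norm_eq_abs, abs_div, abs_div, abs_mul,
      abs_of_nonneg (Real.exp_nonneg _), abs_of_nonneg (by positivity : (0:ℝ) ≤ θ ^ 2),
      abs_of_nonneg hc1]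
    apply div_le_div_of_nonneg_right _ (by positivity)
    · rw [abs_sub_comm, abs_of_nonneg hc1]
      calc Real.exp (-(β * θ ^ α)) * (1 - Real.cos (b * θ)) ≤ 1 * (1 - Real.cos (b * θ)) := by
            apply mul_le_mul_of_nonneg_right _ hc1
            rw [← Real.exp_zero]
            apply Real.exp_le_exp.mpr
            have : (0:ℝ) ≤ θ ^ α := Real.rpow_nonneg hθ0.le α
            nlinarith
        _ = 1 - Real.cos (b * θ) := one_mul _
  have hg3eq : ∀ θ : ℝ, g3 θ = g1 θ + g2 θ := by
    intro θ
    rw [hg1, hg2, hg3]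
    ring
  have hg3int : IntegrableOn g3 (Ioi 0) := by
    rw [funext hg3eq]  -- may fail; fallback
    exact hg1int.add hg2int
  -- numVar in terms of g2
  have hnum : numVar α c a t L = b + (2 / Real.pi) * ∫ θ in Ioi (0:ℝ), g2 θ := by
    rw [numVar, hbdef]
    congr 1
    congr 1
    apply setIntegral_congr_fun measurableSet_Ioi
    intro θ hθ
    have hθ0 : (0:ℝ) < θ := hθ
    have h1 : 2 * c * t * (θ / a) ^ α = β * θ ^ α := by
      rw [Real.div_rpow hθ0.le ha.le, hβdef]
      ring
    have h2 : L * θ / a = b * θ := by rw [hbdef]; ring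
    simp only
    rw [h1, h2]
  -- ∫ g2 = ∫ g3 - ∫ g1
  have hsplit : ∫ θ in Ioi (0:ℝ), g2 θ = (∫ θ in Ioi (0:ℝ), g3 θ) - ∫ θ in Ioi (0:ℝ), g1 θ := by
    rw [← integral_sub hg3int hg1int]
    apply setIntegral_congr_fun measurableSet_Ioi
    intro θ _
    simp only [hg1, hg2, hg3]
    ring
  have hg1val : ∫ θ in Ioi (0:ℝ), g1 θ = Real.pi * b / 2 := integral_one_sub_cos_div_sq hb
  have hnum2 : numVar α c a t L = (2 / Real.pi) * ∫ θ in Ioi (0:ℝ), g3 θ := by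
    rw [hnum, hsplit, hg1val]
    field_simp
    ring
  -- lower bounds
  have hg3nonneg : ∀ θ ∈ Ioi (0:ℝ), 0 ≤ g3 θ := by
    intro θ hθ
    have hθ0 : (0:ℝ) < θ := hθ
    have hc1 := one_sub_cos_nonneg (b * θ)
    have hexp : Real.exp (-(β * θ ^ α)) ≤ 1 := by
      rw [← Real.exp_zero]
      apply Real.exp_le_exp.mpr
      have : (0:ℝ) ≤ θ ^ α := Real.rpow_nonneg hθ0.le α
      nlinarith
    rw [hg3]
    apply div_nonneg _ (by positivity)
    exact mul_nonneg (by linarith) hc1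
  have hstep1 : ∫ θ in Ioc (0:ℝ) 1, g3 θ ≤ ∫ θ in Ioi (0:ℝ), g3 θ := by
    apply setIntegral_mono_set hg3int
    · filter_upwards [ae_restrict_mem measurableSet_Ioi] with θ hθ
      exact hg3nonneg θ hθ
    · exact HasSubset.Subset.eventuallyLE Ioc_subset_Ioi_self
  have hstep2 : κ * ∫ θ in Ioc (0:ℝ) 1, (1 - Real.cos (b * θ)) / θ ≤ ∫ θ in Ioc (0:ℝ) 1, g3 θ := by
    rw [← integral_const_mul]
    apply setIntegral_mono_on
    · exact (integrableOn_one_sub_cos_div b).const_mul κ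
    · exact hg3int.mono_set Ioc_subset_Ioi_self
    · exact measurableSet_Ioc
    · intro θ hθ
      obtain ⟨hθ0, hθ1⟩ := hθ
      have hc1 := one_sub_cos_nonneg (b * θ)
      have hαθ1 : θ ^ α ≤ 1 := Real.rpow_le_one hθ0.le hθ1 hα0.le
      have hαθ0 : 0 ≤ θ ^ α := Real.rpow_nonneg hθ0.le α
      have hθα : θ ≤ θ ^ α := by
        calc θ = θ ^ (1:ℝ) := (Real.rpow_one θ).symm
          _ ≤ θ ^ α := Real.rpow_le_rpow_of_exponent_ge hθ0 hθ1 hα1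
      have hexpb : κ * θ ^ α ≤ 1 - Real.exp (-(β * θ ^ α)) := by
        rw [hκdef]
        exact one_sub_exp_bound hβ hαθ0 hαθ1
      have hform : κ * ((1 - Real.cos (b * θ)) / θ) = (κ * θ) * ((1 - Real.cos (b * θ)) / θ ^ 2) := by
        field_simp
      rw [hform]
      simp only [hg3]
      rw [mul_div_assoc]
      apply mul_le_mul_of_nonneg_right _ (by positivity)
      calc κ * θ ≤ κ * θ ^ α := by nlinarith
        _ ≤ 1 - Real.exp (-(β * θ ^ α)) := hexpb
  -- combine
  rw [hnum2]
  have h2π : (0:ℝ) ≤ 2 / Real.pi := by positivity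
  calc (2 / Real.pi) * κ * ∫ θ in Ioc (0:ℝ) 1, (1 - Real.cos (b * θ)) / θ
      = (2 / Real.pi) * (κ * ∫ θ in Ioc (0:ℝ) 1, (1 - Real.cos (b * θ)) / θ) := by ring
    _ ≤ (2 / Real.pi) * ∫ θ in Ioc (0:ℝ) 1, g3 θ := by
        apply mul_le_mul_of_nonneg_left (le_trans hstep2 le_rfl) h2π
    _ ≤ (2 / Real.pi) * ∫ θ in Ioi (0:ℝ), g3 θ :=
        mul_le_mul_of_nonneg_left hstep1 h2π
end

section
/- For α = 1 and every c > 0, a > 0, t > 0, the number variance grows logarithmically: lim_{L→∞} V_t^{1,c,a}[L] / log L = 4ct/(aπ). -/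
open MeasureTheory Filter Set

open Real

lemma integral_exp_mul_cos (b r : ℝ) (hb : 0 < b) :
    ∫ u in Ioi (0:ℝ), Real.exp (-(b*u)) * Real.cos (r*u) = b / (b^2 + r^2) := by
  have hbr : (0:ℝ) < b^2 + r^2 := by positivity
  set F : ℝ → ℝ := fun u => Real.exp (-(b*u)) * (r * Real.sin (r*u) - b * Real.cos (r*u)) / (b^2+r^2) with hF
  have hderiv : ∀ u : ℝ, HasDerivAt F (Real.exp (-(b*u)) * Real.cos (r*u)) u := by
    intro u
    have h0 : HasDerivAt (fun u : ℝ => -(b*u)) (-b) u := by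
      simpa using ((hasDerivAt_neg u).const_mul b)
    have h1 : HasDerivAt (fun u : ℝ => Real.exp (-(b*u))) (Real.exp (-(b*u)) * (-b)) u := h0.exp
    have hsin : HasDerivAt (fun u : ℝ => Real.sin (r*u)) (Real.cos (r*u) * r) u := by
      simpa using ((hasDerivAt_id u).const_mul r).sin
    have hcos : HasDerivAt (fun u : ℝ => Real.cos (r*u)) (-Real.sin (r*u) * r) u := by
      simpa using ((hasDerivAt_id u).const_mul r).cos
    have h2 : HasDerivAt (fun u : ℝ => r * Real.sin (r*u) - b * Real.cos (r*u))
        (r * (Real.cos (r*u) * r) - b * (-Real.sin (r*u) * r)) u :=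
      (hsin.const_mul r).sub (hcos.const_mul b)
    have := (h1.mul h2).div_const (b^2+r^2)
    refine this.congr_deriv ?_
    field_simp
    ring
  have hint : IntegrableOn (fun u => Real.exp (-(b*u)) * Real.cos (r*u)) (Ioi (0:ℝ)) := by
    refine (exp_neg_integrableOn_Ioi 0 hb).mono' ?_ ?_
    · exact (Continuous.mul (by continuity) (by continuity)).aestronglyMeasurable
    · filter_upwards with u
      rw [norm_mul, Real.norm_eq_abs, Real.norm_eq_abs, Real.abs_exp, neg_mul]
      calc Real.exp (-(b*u)) * |Real.cos (r*u)| ≤ Real.exp (-(b*u)) * 1 := by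
            gcongr; exact Real.abs_cos_le_one _
        _ = Real.exp (-(b*u)) := mul_one _
  have htends : Tendsto F atTop (nhds 0) := by
    have hg : Tendsto (fun u => Real.exp (-(b*u)) * ((|r| + |b|) / (b^2+r^2))) atTop (nhds 0) := by
      have h1 : Tendsto (fun u : ℝ => -(b*u)) atTop atBot := by
        exact tendsto_neg_atTop_atBot.comp (tendsto_id.const_mul_atTop hb)
      have := (Real.tendsto_exp_atBot.comp h1).mul_const ((|r| + |b|) / (b^2+r^2))
      simpa using this
    apply squeeze_zero_norm _ hg
    intro u
    rw [hF]
    simp only [Real.norm_eq_abs, abs_div, abs_mul, Real.abs_exp, abs_of_pos hbr]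
    rw [div_le_iff₀ hbr, mul_assoc, div_mul_cancel₀ _ hbr.ne']
    gcongr
    calc |r * Real.sin (r*u) - b * Real.cos (r*u)| ≤ |r * Real.sin (r*u)| + |b * Real.cos (r*u)| :=
          abs_sub _ _
      _ ≤ |r| * 1 + |b| * 1 := by
          rw [abs_mul, abs_mul]
          gcongr
          · exact Real.abs_sin_le_one _
          · exact Real.abs_cos_le_one _
      _ = |r| + |b| := by ring
  rw [integral_Ioi_of_hasDerivAt_of_tendsto' (fun x _ => hderiv x) hint htends]
  rw [hF]
  simp
  ring

lemma finiteIoc (x y : ℝ) : IsFiniteMeasure (volume.restrict (Ioc x y)) := by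
  constructor
  rw [Measure.restrict_apply_univ, Real.volume_Ioc]
  exact ENNReal.ofReal_lt_top

lemma integral_arctan_aux (b : ℝ) (hb : 0 < b) (s : ℝ) :
    ∫ r in (0:ℝ)..s, b/(b^2+r^2) = Real.arctan (s/b) := by
  have h : ∀ r ∈ uIcc (0:ℝ) s, HasDerivAt (fun r => Real.arctan (r/b)) (b/(b^2+r^2)) r := by
    intro r _
    have := (Real.hasDerivAt_arctan (r/b)).comp r ((hasDerivAt_id r).div_const b)
    refine this.congr_deriv ?_
    have h1 : (0:ℝ) < 1 + (r/b)^2 := by positivity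
    field_simp
  have hint : IntervalIntegrable (fun r => b/(b^2+r^2)) volume 0 s := by
    apply Continuous.intervalIntegrable
    exact continuous_const.div (by continuity) (fun r => by positivity)
  rw [intervalIntegral.integral_eq_sub_of_hasDerivAt h hint]
  simp

lemma integral_exp_mul_sin_div (b s : ℝ) (hb : 0 < b) (hs : 0 ≤ s) :
    ∫ u in Ioi (0:ℝ), Real.exp (-(b*u)) * (Real.sin (s*u) / u) = Real.arctan (s/b) := by
  have : IsFiniteMeasure (volume.restrict (Ioc (0:ℝ) s)) := finiteIoc 0 s
  have hprod : Integrable (Function.uncurry fun u r => Real.exp (-(b*u)) * Real.cos (r*u))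
      ((volume.restrict (Ioi (0:ℝ))).prod (volume.restrict (Ioc (0:ℝ) s))) := by
    have hg : Integrable (fun z : ℝ × ℝ => Real.exp (-b*z.1) * 1)
        ((volume.restrict (Ioi (0:ℝ))).prod (volume.restrict (Ioc (0:ℝ) s))) :=
      Integrable.mul_prod (exp_neg_integrableOn_Ioi 0 hb) (integrable_const 1)
    refine hg.mono' ?_ ?_
    · exact (Continuous.mul (by continuity) (by continuity)).aestronglyMeasurable
    · filter_upwards with z
      simp only [Function.uncurry, norm_mul, Real.norm_eq_abs, Real.abs_exp, neg_mul, mul_one]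
      calc Real.exp (-(b*z.1)) * |Real.cos (z.2*z.1)| ≤ Real.exp (-(b*z.1)) * 1 := by
            gcongr; exact Real.abs_cos_le_one _
        _ = Real.exp (-(b*z.1)) := mul_one _
  have swap := MeasureTheory.integral_integral_swap hprod
  have lhs_eq : ∫ u in Ioi (0:ℝ), Real.exp (-(b*u)) * (Real.sin (s*u) / u)
      = ∫ u in Ioi (0:ℝ), ∫ r in Ioc (0:ℝ) s, Real.exp (-(b*u)) * Real.cos (r*u) := by
    refine setIntegral_congr_fun measurableSet_Ioi (fun u hu => ?_)
    have hu' : (u:ℝ) ≠ 0 := (LT.lt.ne' hu)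
    rw [integral_const_mul, ← intervalIntegral.integral_of_le hs,
      intervalIntegral.integral_comp_mul_right Real.cos hu']
    simp [integral_cos, div_eq_inv_mul]
  have rhs_eq : ∫ r in Ioc (0:ℝ) s, ∫ u in Ioi (0:ℝ), Real.exp (-(b*u)) * Real.cos (r*u)
      = Real.arctan (s/b) := by
    rw [setIntegral_congr_fun measurableSet_Ioc
      (fun r _ => integral_exp_mul_cos b r hb),
      ← intervalIntegral.integral_of_le hs, integral_arctan_aux b hb s]
  rw [lhs_eq, swap, rhs_eq]

lemma integral_arctan_div (b lam : ℝ) (hb : 0 < b) :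
    ∫ s in (0:ℝ)..lam, Real.arctan (s/b)
      = lam * Real.arctan (lam/b) - b/2 * Real.log (1+(lam/b)^2) := by
  have h : ∀ s ∈ uIcc (0:ℝ) lam,
      HasDerivAt (fun s => s * Real.arctan (s/b) - b/2 * Real.log (1+(s/b)^2))
        (Real.arctan (s/b)) s := by
    intro s _
    have h1 : (0:ℝ) < 1 + (s/b)^2 := by positivity
    have harc : HasDerivAt (fun s : ℝ => Real.arctan (s/b)) (1/(1+(s/b)^2) * (1/b)) s :=
      by have := (Real.hasDerivAt_arctan (s/b)).comp s ((hasDerivAt_id s).div_const b); exact this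
    have hmul : HasDerivAt (fun s : ℝ => s * Real.arctan (s/b))
        (1 * Real.arctan (s/b) + s * (1/(1+(s/b)^2) * (1/b))) s :=
      (hasDerivAt_id s).mul harc
    have hsq : HasDerivAt (fun s : ℝ => 1 + (s/b)^2) ((2:ℕ) * (s/b)^1 * (1/b)) s := by
      exact (((hasDerivAt_id s).div_const b).pow 2).const_add 1
    have hlog : HasDerivAt (fun s : ℝ => Real.log (1+(s/b)^2))
        (((2:ℕ) * (s/b)^1 * (1/b)) / (1+(s/b)^2)) s := hsq.log h1.ne'
    have := hmul.sub (hlog.const_mul (b/2))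
    refine this.congr_deriv ?_
    field_simp
    ring
  rw [intervalIntegral.integral_eq_sub_of_hasDerivAt h
    ((Real.continuous_arctan.comp (by continuity)).intervalIntegrable 0 lam)]
  simp

lemma integral_exp_mul_cos_sub_one (b lam : ℝ) (hb : 0 < b) (hlam : 0 ≤ lam) :
    ∫ θ in Ioi (0:ℝ), Real.exp (-(b*θ)) * (Real.cos (lam*θ) - 1) / θ^2
      = b/2 * Real.log (1+(lam/b)^2) - lam * Real.arctan (lam/b) := by
  have : IsFiniteMeasure (volume.restrict (Ioc (0:ℝ) lam)) := finiteIoc 0 lam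
  have hprod : Integrable (Function.uncurry fun θ s => Real.exp (-(b*θ)) * (Real.sin (s*θ) / θ))
      ((volume.restrict (Ioi (0:ℝ))).prod (volume.restrict (Ioc (0:ℝ) lam))) := by
    have hg : Integrable (fun z : ℝ × ℝ => Real.exp (-b*z.1) * lam)
        ((volume.restrict (Ioi (0:ℝ))).prod (volume.restrict (Ioc (0:ℝ) lam))) :=
      Integrable.mul_prod (exp_neg_integrableOn_Ioi 0 hb) (integrable_const lam)
    refine hg.mono' ?_ ?_
    · apply Measurable.aestronglyMeasurable
      exact ((measurable_fst.const_mul b).neg.exp).mul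
        (((measurable_snd.mul measurable_fst).sin).div measurable_fst)
    · rw [Measure.prod_restrict, ae_restrict_iff' (measurableSet_Ioi.prod measurableSet_Ioc)]
      filter_upwards with z hz
      obtain ⟨hz1, hz2⟩ := hz
      simp only [Function.uncurry, norm_mul, Real.norm_eq_abs, Real.abs_exp, neg_mul]
      have hθ : (0:ℝ) < z.1 := hz1
      have hs1 : (0:ℝ) < z.2 := hz2.1
      gcongr rexp (-(b*z.1)) * ?_
      rw [abs_div, abs_of_pos hθ, div_le_iff₀ hθ]
      calc |Real.sin (z.2 * z.1)| ≤ |z.2 * z.1| := Real.abs_sin_le_abs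
        _ = z.2 * z.1 := abs_of_pos (by positivity)
        _ ≤ lam * z.1 := by gcongr; exact hz2.2
  have swap := MeasureTheory.integral_integral_swap hprod
  have lhs_eq : ∫ θ in Ioi (0:ℝ), Real.exp (-(b*θ)) * (Real.cos (lam*θ) - 1) / θ^2
      = ∫ θ in Ioi (0:ℝ), (- ∫ s in Ioc (0:ℝ) lam, Real.exp (-(b*θ)) * (Real.sin (s*θ) / θ)) := by
    refine setIntegral_congr_fun measurableSet_Ioi (fun θ hθ => ?_)
    have hθ' : (θ:ℝ) ≠ 0 := (LT.lt.ne' hθ)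
    rw [integral_const_mul, ← intervalIntegral.integral_of_le hlam]
    have : ∫ s in (0:ℝ)..lam, Real.sin (s*θ) / θ = (1 - Real.cos (lam*θ))/θ^2 := by
      rw [intervalIntegral.integral_div, intervalIntegral.integral_comp_mul_right Real.sin hθ',
        integral_sin]
      simp only [zero_mul, Real.cos_zero, smul_eq_mul]
      rw [inv_mul_eq_div, div_div, ← sq]
    rw [this]
    ring
  rw [lhs_eq, integral_neg, swap]
  have rhs_eq : ∫ s in Ioc (0:ℝ) lam, ∫ θ in Ioi (0:ℝ), Real.exp (-(b*θ)) * (Real.sin (s*θ) / θ)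
      = ∫ s in Ioc (0:ℝ) lam, Real.arctan (s/b) := by
    refine setIntegral_congr_fun measurableSet_Ioc (fun s hs => ?_)
    exact integral_exp_mul_sin_div b s hb hs.1.le
  rw [rhs_eq, ← intervalIntegral.integral_of_le hlam, integral_arctan_div b lam hb]
  ring

lemma tendsto_log_inv_zero : Tendsto (fun L : ℝ => (Real.log L)⁻¹) atTop (nhds 0) :=
  Real.tendsto_log_atTop.inv_tendsto_atTop

lemma tendsto_mul_arctan_div (k : ℝ) (hk : 0 < k) :
    Tendsto (fun L : ℝ => L * Real.arctan (k/L)) atTop (nhds k) := by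
  have hslope : Tendsto (slope Real.arctan 0) (nhdsWithin 0 {(0:ℝ)}ᶜ) (nhds 1) := by
    have := hasDerivAt_iff_tendsto_slope.mp (Real.hasDerivAt_arctan 0)
    simpa using this
  have hy : Tendsto (fun L : ℝ => k/L) atTop (nhdsWithin 0 {(0:ℝ)}ᶜ) := by
    apply tendsto_nhdsWithin_of_tendsto_nhds_of_eventually_within
    · exact Tendsto.div_atTop tendsto_const_nhds tendsto_id
    · filter_upwards [eventually_gt_atTop (0:ℝ)] with L hL
      exact (div_pos hk hL).ne'
  have := (hslope.comp hy).const_mul k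
  rw [mul_one] at this
  apply this.congr'
  filter_upwards [eventually_gt_atTop (0:ℝ)] with L hL
  have hkL : k / L ≠ 0 := (div_pos hk hL).ne'
  simp only [Function.comp, slope_def_field, Real.arctan_zero, sub_zero]
  field_simp

lemma tendsto_log_ratio (k : ℝ) (hk : 0 < k) :
    Tendsto (fun L : ℝ => Real.log (1 + (L/k)^2) / Real.log L) atTop (nhds 2) := by
  have h1 : Tendsto (fun L : ℝ => 1 + (k/L)^2) atTop (nhds 1) := by
    have h0 : Tendsto (fun L : ℝ => (k/L)^2) atTop (nhds 0) := by
      have hd : Tendsto (fun L : ℝ => k/L) atTop (nhds 0) :=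
        Tendsto.div_atTop tendsto_const_nhds tendsto_id
      simpa using hd.pow 2
    simpa using (tendsto_const_nhds (x := (1:ℝ))).add h0
  have hlog1 : Tendsto (fun L : ℝ => Real.log (1 + (k/L)^2)) atTop (nhds 0) := by
    have := (Real.continuousAt_log (by norm_num : (1:ℝ) ≠ 0)).tendsto.comp h1
    rw [Real.log_one] at this
    exact this
  have hmain : Tendsto
      (fun L : ℝ => 2 + (Real.log (1 + (k/L)^2) - 2 * Real.log k) * (Real.log L)⁻¹)
      atTop (nhds 2) := by
    have h2 := ((hlog1.sub (tendsto_const_nhds (x := 2 * Real.log k))).mul tendsto_log_inv_zero)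
    simpa using (tendsto_const_nhds (x := (2:ℝ))).add h2
  apply hmain.congr'
  filter_upwards [eventually_gt_atTop (1:ℝ)] with L hL
  have hL0 : 0 < L := lt_trans one_pos hL
  have hlogL : Real.log L ≠ 0 := (Real.log_pos hL).ne'
  have key : Real.log (1 + (L/k)^2)
      = 2 * Real.log L + (Real.log (1 + (k/L)^2) - 2 * Real.log k) := by
    have heq : 1 + (L/k)^2 = (L^2 * (1 + (k/L)^2)) / k^2 := by field_simp; ring
    rw [heq, Real.log_div (by positivity) (by positivity),
      Real.log_mul (by positivity) (by positivity), Real.log_pow, Real.log_pow]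
    push_cast
    ring
  rw [key]
  field_simp

theorem numVar_log_growth_cauchy (c a t : ℝ) (hc : 0 < c) (ha : 0 < a) (ht : 0 < t) :
    Tendsto (fun L : ℝ => numVar 1 c a t L / Real.log L) atTop
      (nhds (4 * c * t / (a * Real.pi))) := by
  have hpi := Real.pi_pos
  set k : ℝ := 2*c*t with hkdef
  have hk : 0 < k := by positivity
  set b : ℝ := 2*c*t/a with hbdef
  have hb : 0 < b := by positivity
  have hclosed : ∀ᶠ L in atTop, numVar 1 c a t L
      = L/a + (2/Real.pi) * (b/2 * Real.log (1 + (L/k)^2) - (L/a) * Real.arctan (L/k)) := by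
    filter_upwards [eventually_gt_atTop (0:ℝ)] with L hL
    have hIeq : (∫ θ in Ioi (0:ℝ),
        Real.exp (-(2*c*t*(θ/a)^(1:ℝ))) * (Real.cos (L*θ/a) - 1) / θ^2)
        = ∫ θ in Ioi (0:ℝ), Real.exp (-(b*θ)) * (Real.cos ((L/a)*θ) - 1) / θ^2 := by
      congr 1
      funext θ
      rw [Real.rpow_one, show 2*c*t*(θ/a) = b*θ by rw [hbdef]; ring,
        show L*θ/a = (L/a)*θ by ring]
    have hq : (L/a)/b = L/k := by rw [hbdef, hkdef]; field_simp
    rw [show numVar 1 c a t L = L / a + (2 / Real.pi) * ∫ θ in Set.Ioi (0:ℝ), Real.exp (-(2 * c * t * (θ / a) ^ (1:ℝ))) * (Real.cos (L * θ / a) - 1) / θ ^ 2 from rfl, hIeq, integral_exp_mul_cos_sub_one b (L/a) hb (by positivity), hq]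
  have T1 : Tendsto (fun L : ℝ =>
      (L/a - (2/Real.pi)*((L/a) * Real.arctan (L/k)))/Real.log L) atTop (nhds 0) := by
    have h := ((tendsto_mul_arctan_div k hk).mul tendsto_log_inv_zero).const_mul
      (2/(Real.pi*a))
    rw [mul_zero, mul_zero] at h
    apply h.congr'
    filter_upwards [eventually_gt_atTop (1:ℝ)] with L hL
    have hL0 : 0 < L := lt_trans one_pos hL
    have harct : Real.arctan (L/k) = Real.pi/2 - Real.arctan (k/L) := by
      rw [show L/k = (k/L)⁻¹ by rw [inv_div], Real.arctan_inv_of_pos (div_pos hk hL0)]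
    rw [harct]
    have hnum : L/a - 2/Real.pi * (L/a * (Real.pi/2 - Real.arctan (k/L)))
        = 2/(Real.pi*a) * (L * Real.arctan (k/L)) := by
      field_simp
      ring
    rw [hnum]
    ring
  have T2 := (tendsto_log_ratio k hk).const_mul ((2/Real.pi) * (b/2))
  have Tsum := T1.add T2
  rw [zero_add] at Tsum
  have hval : (2/Real.pi) * (b/2) * 2 = 4*c*t/(a*Real.pi) := by
    rw [hbdef]; field_simp; ring
  rw [hval] at Tsum
  apply Tendsto.congr' _ Tsum
  filter_upwards [hclosed, eventually_gt_atTop (1:ℝ)] with L hLc hL1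
  rw [hLc]
  ring
end

section
/- For every c > 0, a > 0, t > 0 and L > 0, as the stability index α tends to 0 from above the number variance recovers Poisson behaviour: lim_{α→0⁺} V_t^{α,c,a}[L] = (L/a)(1 − e^{-2ct}). -/
open MeasureTheory Filter Set Topology

-- Lemma A: over s, for fixed θ > 0
lemma lapA {θ : ℝ} (hθ : 0 < θ) :
    IntegrableOn (fun s : ℝ => s * Real.exp (-(s * θ))) (Ioi 0) ∧
    ∫ s in Ioi (0:ℝ), s * Real.exp (-(s * θ)) = 1 / θ ^ 2 := by
  have hθ' : θ ≠ 0 := ne_of_gt hθ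
  set F : ℝ → ℝ := fun s => -((θ * s + 1) * Real.exp (-(s * θ))) / θ ^ 2 with hF
  have hderiv : ∀ s ∈ Ici (0:ℝ), HasDerivAt F (s * Real.exp (-(s * θ))) s := by
    intro s _
    have h1 : HasDerivAt (fun s : ℝ => -(s * θ)) (-θ) s := by
      exact (hasDerivAt_mul_const θ).neg
    have h2 := h1.exp
    have h3 : HasDerivAt (fun s : ℝ => θ * s + 1) θ s := by
      simpa using ((hasDerivAt_id s).const_mul θ).add_const 1
    have h4 := ((h3.mul h2).neg).div_const (θ ^ 2)
    refine h4.congr_deriv ?_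
    field_simp
    ring
  have hpos : ∀ s ∈ Ioi (0:ℝ), 0 ≤ s * Real.exp (-(s * θ)) := fun s hs =>
    mul_nonneg (le_of_lt hs) (Real.exp_pos _).le
  have htend : Tendsto F atTop (𝓝 0) := by
    have ht : Tendsto (fun s : ℝ => s * θ) atTop atTop := tendsto_id.atTop_mul_const hθ
    have h1 : Tendsto (fun s : ℝ => (s * θ) * Real.exp (-(s * θ))) atTop (𝓝 0) := by
      have := (Real.tendsto_pow_mul_exp_neg_atTop_nhds_zero 1).comp ht
      simpa [Function.comp_def] using this
    have h2 : Tendsto (fun s : ℝ => Real.exp (-(s * θ))) atTop (𝓝 0) := by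
      exact Real.tendsto_exp_atBot.comp (tendsto_neg_atTop_atBot.comp ht)
    have h3 : Tendsto (fun s : ℝ => ((s * θ) * Real.exp (-(s * θ)) + Real.exp (-(s * θ)))) atTop (𝓝 0) := by
      simpa using h1.add h2
    have h4 := (h3.neg).div_const (θ ^ 2)
    refine Tendsto.congr (fun s => ?_) (by simpa using h4)
    simp only [hF]
    ring
  refine ⟨integrableOn_Ioi_deriv_of_nonneg' hderiv hpos htend, ?_⟩
  rw [integral_Ioi_of_hasDerivAt_of_nonneg' hderiv hpos htend]
  simp [hF]
  field_simp

-- Lemma B: over θ, for fixed s > 0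
lemma lapB {s b : ℝ} (hs : 0 < s) :
    IntegrableOn (fun θ : ℝ => Real.exp (-(s * θ)) * (1 - Real.cos (b * θ))) (Ioi 0) ∧
    ∫ θ in Ioi (0:ℝ), Real.exp (-(s * θ)) * (1 - Real.cos (b * θ))
      = 1 / s - s / (s ^ 2 + b ^ 2) := by
  have hs' : s ≠ 0 := ne_of_gt hs
  have hsb : s ^ 2 + b ^ 2 ≠ 0 := by positivity
  set G : ℝ → ℝ := fun θ => -(Real.exp (-(s * θ)) / s) -
      Real.exp (-(s * θ)) * ((b * Real.sin (b * θ) - s * Real.cos (b * θ)) / (s ^ 2 + b ^ 2))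
    with hG
  have hderiv : ∀ θ ∈ Ici (0:ℝ),
      HasDerivAt G (Real.exp (-(s * θ)) * (1 - Real.cos (b * θ))) θ := by
    intro θ _
    have h1 : HasDerivAt (fun θ : ℝ => -(s * θ)) (-s) θ := by
      exact (hasDerivAt_const_mul s).neg
    have he := h1.exp
    have hb1 : HasDerivAt (fun θ : ℝ => b * θ) b θ := by
      simpa using (hasDerivAt_id θ).const_mul b
    have hsin := hb1.sin
    have hcos := hb1.cos
    have hin : HasDerivAt (fun θ : ℝ => b * Real.sin (b * θ) - s * Real.cos (b * θ))
        (b * (Real.cos (b * θ) * b) - s * (-Real.sin (b * θ) * b)) θ :=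
      (hsin.const_mul b).sub (hcos.const_mul s)
    have h4 := ((he.div_const s).neg).sub (he.mul (hin.div_const (s ^ 2 + b ^ 2)))
    refine h4.congr_deriv ?_
    field_simp
    ring
  have hpos : ∀ θ ∈ Ioi (0:ℝ), 0 ≤ Real.exp (-(s * θ)) * (1 - Real.cos (b * θ)) := by
    intro θ _
    have := Real.cos_le_one (b * θ)
    have h := (Real.exp_pos (-(s * θ))).le
    nlinarith
  have htend : Tendsto G atTop (𝓝 0) := by
    have ht : Tendsto (fun θ : ℝ => s * θ) atTop atTop := tendsto_id.const_mul_atTop hs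
    have h2 : Tendsto (fun θ : ℝ => Real.exp (-(s * θ))) atTop (𝓝 0) :=
      Real.tendsto_exp_atBot.comp (tendsto_neg_atTop_atBot.comp ht)
    have hterm1 : Tendsto (fun θ : ℝ => -(Real.exp (-(s * θ)) / s)) atTop (𝓝 0) := by
      simpa using (h2.div_const s).neg
    have hterm2 : Tendsto (fun θ : ℝ => Real.exp (-(s * θ)) *
        ((b * Real.sin (b * θ) - s * Real.cos (b * θ)) / (s ^ 2 + b ^ 2))) atTop (𝓝 0) := by
      apply h2.zero_mul_isBoundedUnder_le
      refine isBoundedUnder_of ⟨(|b| + |s|) / (s ^ 2 + b ^ 2), fun θ => ?_⟩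
      simp only [Function.comp, norm_div, Real.norm_eq_abs]
      rw [abs_of_nonneg (show (0:ℝ) ≤ s ^ 2 + b ^ 2 by positivity)]
      have hnum : |b * Real.sin (b * θ) - s * Real.cos (b * θ)| ≤ |b| + |s| := by
        calc |b * Real.sin (b * θ) - s * Real.cos (b * θ)|
            ≤ |b * Real.sin (b * θ)| + |s * Real.cos (b * θ)| := abs_sub _ _
          _ ≤ |b| + |s| := by
              rw [abs_mul, abs_mul]
              have h1 := Real.abs_sin_le_one (b * θ)
              have h2 := Real.abs_cos_le_one (b * θ)
              have := abs_nonneg b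
              have := abs_nonneg s
              nlinarith
      gcongr
    have := hterm1.sub hterm2
    simpa using this
  refine ⟨integrableOn_Ioi_deriv_of_nonneg' hderiv hpos htend, ?_⟩
  rw [integral_Ioi_of_hasDerivAt_of_nonneg' hderiv hpos htend]
  simp [hG]
  field_simp
  ring

-- Lemma C
lemma lapC {b : ℝ} (hb : 0 < b) :
    IntegrableOn (fun s : ℝ => b ^ 2 / (s ^ 2 + b ^ 2)) (Ioi 0) ∧
    ∫ s in Ioi (0:ℝ), b ^ 2 / (s ^ 2 + b ^ 2) = Real.pi * b / 2 := by
  have hb' : b ≠ 0 := ne_of_gt hb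
  set F : ℝ → ℝ := fun s => b * Real.arctan (s / b) with hF
  have hderiv : ∀ s ∈ Ici (0:ℝ), HasDerivAt F (b ^ 2 / (s ^ 2 + b ^ 2)) s := by
    intro s _
    have h1 : HasDerivAt (fun s : ℝ => s / b) (1 / b) s := by
      simpa using (hasDerivAt_id s).div_const b
    have h2 := (Real.hasDerivAt_arctan (s / b)).comp s h1
    have h3 := h2.const_mul b
    refine h3.congr_deriv ?_
    have h4 : 1 + (s / b) ^ 2 ≠ 0 := by positivity
    field_simp
    ring
  have hpos : ∀ s ∈ Ioi (0:ℝ), 0 ≤ b ^ 2 / (s ^ 2 + b ^ 2) := by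
    intro s _; positivity
  have htend : Tendsto F atTop (𝓝 (b * (Real.pi / 2))) := by
    have ht : Tendsto (fun s : ℝ => s / b) atTop atTop := tendsto_id.atTop_div_const hb
    exact ((tendsto_nhds_of_tendsto_nhdsWithin Real.tendsto_arctan_atTop).comp ht).const_mul b
  refine ⟨integrableOn_Ioi_deriv_of_nonneg' hderiv hpos htend, ?_⟩
  rw [integral_Ioi_of_hasDerivAt_of_nonneg' hderiv hpos htend]
  simp [hF]
  ring


lemma keyIntegral {b : ℝ} (hb : 0 < b) :
    IntegrableOn (fun θ : ℝ => (1 - Real.cos (b * θ)) / θ ^ 2) (Ioi 0) ∧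
    ∫ θ in Ioi (0:ℝ), (1 - Real.cos (b * θ)) / θ ^ 2 = Real.pi * b / 2 := by
  set μ := volume.restrict (Ioi (0:ℝ)) with hμ
  have hcont : Continuous (fun p : ℝ × ℝ =>
      p.2 * Real.exp (-(p.2 * p.1)) * (1 - Real.cos (b * p.1))) := by fun_prop
  have hmeas : AEMeasurable (Function.uncurry fun θ s : ℝ =>
      ENNReal.ofReal (s * Real.exp (-(s * θ)) * (1 - Real.cos (b * θ)))) (μ.prod μ) := by
    exact (ENNReal.continuous_ofReal.comp hcont).measurable.aemeasurable
  have hnncos : ∀ θ : ℝ, 0 ≤ 1 - Real.cos (b * θ) := fun θ => by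
    have := Real.cos_le_one (b * θ); linarith
  have E1 : ∀ θ ∈ Ioi (0:ℝ), ENNReal.ofReal ((1 - Real.cos (b * θ)) / θ ^ 2)
      = ∫⁻ s in Ioi (0:ℝ),
          ENNReal.ofReal (s * Real.exp (-(s * θ)) * (1 - Real.cos (b * θ))) := by
    intro θ hθ
    have hθ' : (0:ℝ) < θ := hθ
    have hint : Integrable (fun s : ℝ => s * Real.exp (-(s * θ)) * (1 - Real.cos (b * θ))) μ :=
      (lapA hθ').1.mul_const _
    have hnn : 0 ≤ᵐ[μ] fun s : ℝ => s * Real.exp (-(s * θ)) * (1 - Real.cos (b * θ)) := by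
      filter_upwards [ae_restrict_mem measurableSet_Ioi] with s hs
      have : (0:ℝ) < s := hs
      have := hnncos θ
      positivity
    rw [← ofReal_integral_eq_lintegral_ofReal hint hnn]
    congr 1
    rw [integral_mul_const, (lapA hθ').2]
    ring
  have E2 : ∀ s ∈ Ioi (0:ℝ),
      (∫⁻ θ in Ioi (0:ℝ),
        ENNReal.ofReal (s * Real.exp (-(s * θ)) * (1 - Real.cos (b * θ))))
      = ENNReal.ofReal (b ^ 2 / (s ^ 2 + b ^ 2)) := by
    intro s hs
    have hs' : (0:ℝ) < s := hs
    have hint : Integrable (fun θ : ℝ => s * Real.exp (-(s * θ)) * (1 - Real.cos (b * θ))) μ := by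
      have := ((lapB (b := b) hs').1.const_mul s)
      simpa [mul_assoc] using this
    have hnn : 0 ≤ᵐ[μ] fun θ : ℝ => s * Real.exp (-(s * θ)) * (1 - Real.cos (b * θ)) := by
      refine Eventually.of_forall fun θ => ?_
      have := hnncos θ
      have := Real.exp_nonneg (-(s * θ))
      positivity
    rw [← ofReal_integral_eq_lintegral_ofReal hint hnn]
    congr 1
    have : ∫ θ in Ioi (0:ℝ), s * Real.exp (-(s * θ)) * (1 - Real.cos (b * θ))
        = s * ∫ θ in Ioi (0:ℝ), Real.exp (-(s * θ)) * (1 - Real.cos (b * θ)) := by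
      rw [← MeasureTheory.integral_const_mul]
      simp [mul_assoc]
    rw [this, (lapB (b := b) hs').2]
    have h1 : s ^ 2 + b ^ 2 ≠ 0 := by positivity
    field_simp
    ring
  have Ltot : (∫⁻ θ in Ioi (0:ℝ), ENNReal.ofReal ((1 - Real.cos (b * θ)) / θ ^ 2))
      = ENNReal.ofReal (Real.pi * b / 2) := by
    calc (∫⁻ θ in Ioi (0:ℝ), ENNReal.ofReal ((1 - Real.cos (b * θ)) / θ ^ 2))
        = ∫⁻ θ in Ioi (0:ℝ), ∫⁻ s in Ioi (0:ℝ),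
            ENNReal.ofReal (s * Real.exp (-(s * θ)) * (1 - Real.cos (b * θ))) :=
          setLIntegral_congr_fun measurableSet_Ioi E1
      _ = ∫⁻ s in Ioi (0:ℝ), ∫⁻ θ in Ioi (0:ℝ),
            ENNReal.ofReal (s * Real.exp (-(s * θ)) * (1 - Real.cos (b * θ))) :=
          lintegral_lintegral_swap hmeas
      _ = ∫⁻ s in Ioi (0:ℝ), ENNReal.ofReal (b ^ 2 / (s ^ 2 + b ^ 2)) :=
          setLIntegral_congr_fun measurableSet_Ioi E2
      _ = ENNReal.ofReal (Real.pi * b / 2) := by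
          rw [← ofReal_integral_eq_lintegral_ofReal (lapC hb).1
            (Eventually.of_forall fun s => by positivity), (lapC hb).2]
  have hgmeas : AEStronglyMeasurable (fun θ : ℝ => (1 - Real.cos (b * θ)) / θ ^ 2) μ := by
    apply Measurable.aestronglyMeasurable
    fun_prop
  have hgnn : 0 ≤ᵐ[μ] fun θ : ℝ => (1 - Real.cos (b * θ)) / θ ^ 2 := by
    refine Eventually.of_forall fun θ => ?_
    have := hnncos θ
    positivity
  have hginteg : IntegrableOn (fun θ : ℝ => (1 - Real.cos (b * θ)) / θ ^ 2) (Ioi 0) := by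
    refine ⟨hgmeas, ?_⟩
    rw [hasFiniteIntegral_iff_ofReal hgnn, Ltot]
    exact ENNReal.ofReal_lt_top
  refine ⟨hginteg, ?_⟩
  rw [integral_eq_lintegral_of_nonneg_ae hgnn hgmeas, Ltot, ENNReal.toReal_ofReal (by positivity)]


theorem numVar_alpha_to_zero_poisson (c a t L : ℝ)
    (hc : 0 < c) (ha : 0 < a) (ht : 0 < t) (hL : 0 < L) :
    Tendsto (fun α : ℝ => numVar α c a t L) (nhdsWithin 0 (Set.Ioi 0))
      (nhds ((L / a) * (1 - Real.exp (-(2 * c * t))))) := by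
  have hba : 0 < L / a := div_pos hL ha
  have hkey := keyIntegral hba
  have hInt : Tendsto (fun α : ℝ => ∫ θ in Ioi (0:ℝ),
      Real.exp (-(2 * c * t * (θ / a) ^ α)) * (Real.cos (L * θ / a) - 1) / θ ^ 2)
      (nhdsWithin 0 (Ioi 0))
      (𝓝 (∫ θ in Ioi (0:ℝ), Real.exp (-(2 * c * t)) * (Real.cos (L * θ / a) - 1) / θ ^ 2)) := by
    apply tendsto_integral_filter_of_dominated_convergence
      (fun θ => (1 - Real.cos (L / a * θ)) / θ ^ 2)
    · refine Eventually.of_forall fun α => ?_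
      apply Measurable.aestronglyMeasurable
      fun_prop
    · refine Eventually.of_forall fun α => ?_
      filter_upwards [ae_restrict_mem measurableSet_Ioi] with θ hθ
      have hθ' : (0:ℝ) < θ := hθ
      have hcos : Real.cos (L * θ / a) - 1 ≤ 0 := by
        have := Real.cos_le_one (L * θ / a); linarith
      have hrnn : (0:ℝ) ≤ (θ / a) ^ α := Real.rpow_nonneg (by positivity) α
      have hexp : Real.exp (-(2 * c * t * (θ / a) ^ α)) ≤ 1 := by
        rw [Real.exp_le_one_iff]
        exact neg_nonpos.mpr (by positivity)
      have h1 : ‖Real.exp (-(2 * c * t * (θ / a) ^ α)) * (Real.cos (L * θ / a) - 1) / θ ^ 2‖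
          = Real.exp (-(2 * c * t * (θ / a) ^ α)) * (1 - Real.cos (L * θ / a)) / θ ^ 2 := by
        rw [Real.norm_eq_abs, abs_div, abs_of_nonneg (sq_nonneg θ), abs_mul,
          abs_of_nonneg (Real.exp_nonneg _), abs_of_nonpos hcos]
        ring
      rw [h1, div_mul_eq_mul_div]
      have hnum : Real.exp (-(2 * c * t * (θ / a) ^ α)) * (1 - Real.cos (L * θ / a))
          ≤ 1 - Real.cos (L * θ / a) := by
        have h2 : (0:ℝ) ≤ 1 - Real.cos (L * θ / a) := by
          have := Real.cos_le_one (L * θ / a); linarith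
        nlinarith [Real.exp_nonneg (-(2 * c * t * (θ / a) ^ α))]
      gcongr
    · exact hkey.1
    · filter_upwards [ae_restrict_mem measurableSet_Ioi] with θ hθ
      have hθ' : (0:ℝ) < θ := hθ
      have hbase : (0:ℝ) < θ / a := div_pos hθ' ha
      have hc1 : ContinuousAt (fun α : ℝ => (θ / a) ^ α) 0 := by
        have h := Real.continuousAt_rpow ((θ / a), 0) (Or.inl (ne_of_gt hbase))
        exact h.comp ((continuous_const.prodMk continuous_id).continuousAt)
      have hc2 : ContinuousAt (fun α : ℝ =>
          Real.exp (-(2 * c * t * (θ / a) ^ α)) * (Real.cos (L * θ / a) - 1) / θ ^ 2) 0 := by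
        have he : ContinuousAt (fun α : ℝ => Real.exp (-(2 * c * t * (θ / a) ^ α))) 0 :=
          Real.continuous_exp.continuousAt.comp ((hc1.const_mul (2 * c * t)).neg)
        exact (he.mul continuousAt_const).div_const _
      have := hc2.tendsto.mono_left (nhdsWithin_le_nhds (s := Ioi (0:ℝ)))
      simpa [Real.rpow_zero] using this
  have hval : ∫ θ in Ioi (0:ℝ), Real.exp (-(2 * c * t)) * (Real.cos (L * θ / a) - 1) / θ ^ 2
      = Real.exp (-(2 * c * t)) * (-(Real.pi * (L / a) / 2)) := by
    have heq : ∀ θ : ℝ, Real.exp (-(2 * c * t)) * (Real.cos (L * θ / a) - 1) / θ ^ 2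
        = Real.exp (-(2 * c * t)) * (-((1 - Real.cos (L / a * θ)) / θ ^ 2)) := by
      intro θ
      rw [div_mul_eq_mul_div]
      ring
    simp_rw [heq]
    rw [MeasureTheory.integral_const_mul, MeasureTheory.integral_neg, hkey.2]
  simp only [numVar]
  rw [show (L / a) * (1 - Real.exp (-(2 * c * t)))
      = L / a + 2 / Real.pi * (Real.exp (-(2 * c * t)) * (-(Real.pi * (L / a) / 2))) from by
    field_simp
    ring]
  exact tendsto_const_nhds.add ((hval ▸ hInt).const_mul (2 / Real.pi))
end

section
/- For every α ∈ (0,2], c > 0, a > 0, t > 0 and s > 0, the number variance scales as V_t^{α,c,a}[s t^{1/α}] = t^{1/α} f^{α,c,a}(s), where f^{α,c,a}(s) := (4s/(aπ)) ∫₀^∞ u^{-2} sin²(u/2) (1 − e^{-2c(u/s)^α}) du; in particular f^{α,c,a}(s) = V_1^{α,c,a}[s]. -/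
open MeasureTheory Filter Set Topology

section NumVarAux

lemma A1 {u : ℝ} (hu : 0 < u) :
    IntegrableOn (fun t : ℝ => t * Real.exp (-(u * t))) (Set.Ioi 0) := by
  have := integrableOn_rpow_mul_exp_neg_mul_rpow (s := 1) (p := 1) (b := u)
    (by norm_num) one_pos hu
  simpa [Real.rpow_one, neg_mul] using this

lemma A2 {u : ℝ} (hu : 0 < u) :
    ∫ t in Set.Ioi (0:ℝ), t * Real.exp (-(u * t)) = 1 / u ^ 2 := by
  have hderiv : ∀ x ∈ Set.Ici (0:ℝ),
      HasDerivAt (fun t => -((t / u + 1 / u ^ 2) * Real.exp (-(u * t))))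
        (x * Real.exp (-(u * x))) x := by
    intro x _
    have h1 : HasDerivAt (fun t : ℝ => t / u + 1 / u ^ 2) (1 / u) x :=
      ((hasDerivAt_id x).div_const u).add_const _
    have h3 : HasDerivAt (fun t : ℝ => -(u * t)) (-u) x := by
      simpa using ((hasDerivAt_id x).const_mul u).fun_neg
    have h2 : HasDerivAt (fun t : ℝ => Real.exp (-(u * t)))
        (-u * Real.exp (-(u * x))) x := by
      simpa [mul_comm] using h3.exp
    have := (h1.fun_mul h2).fun_neg
    refine this.congr_deriv ?_
    field_simp
    ring
  have h4 : Tendsto (fun t : ℝ => t * Real.exp (-(u * t))) atTop (𝓝 0) := by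
    simpa [Real.rpow_one, neg_mul] using
      tendsto_rpow_mul_exp_neg_mul_atTop_nhds_zero 1 u hu
  have h5 : Tendsto (fun t : ℝ => Real.exp (-(u * t))) atTop (𝓝 0) := by
    simpa [Real.rpow_zero, neg_mul] using
      tendsto_rpow_mul_exp_neg_mul_atTop_nhds_zero 0 u hu
  have htend : Tendsto (fun t : ℝ => -((t / u + 1 / u ^ 2) * Real.exp (-(u * t))))
      atTop (𝓝 0) := by
    have h6 := ((h4.const_mul (1/u)).add (h5.const_mul (1/u^2))).neg
    simp only [mul_zero, add_zero, neg_zero] at h6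
    refine h6.congr fun t => ?_
    ring
  have := integral_Ioi_of_hasDerivAt_of_tendsto' hderiv (A1 hu) htend
  rw [this]
  simp [Real.exp_zero]

lemma B1 {t : ℝ} (ht : 0 < t) :
    IntegrableOn (fun u : ℝ => Real.sin (u / 2) ^ 2 * Real.exp (-(u * t)))
      (Set.Ioi 0) := by
  apply Integrable.mono' (g := fun u : ℝ => Real.exp (-t * u))
    (exp_neg_integrableOn_Ioi 0 ht)
  · exact (((Real.continuous_sin.comp (continuous_id.div_const 2)).pow 2).mul
      ((continuous_id.mul continuous_const).neg.rexp)).aestronglyMeasurable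
  · refine ae_of_all _ fun u => ?_
    rw [Real.norm_eq_abs, abs_of_nonneg (by positivity)]
    calc Real.sin (u / 2) ^ 2 * Real.exp (-(u * t))
        ≤ 1 * Real.exp (-(u * t)) :=
          mul_le_mul_of_nonneg_right (Real.sin_sq_le_one _) (Real.exp_pos _).le
      _ = Real.exp (-t * u) := by rw [one_mul, neg_mul, mul_comm]

lemma B2 {t : ℝ} (ht : 0 < t) :
    ∫ u in Set.Ioi (0:ℝ), Real.sin (u / 2) ^ 2 * Real.exp (-(u * t))
      = 1 / (2 * t) - t / (2 * (t ^ 2 + 1)) := by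
  set Q : ℝ → ℝ := fun u => -(1 / (2 * t)) - (-t * Real.cos u + Real.sin u) / (2 * (t ^ 2 + 1))
    with hQdef
  have ht1 : (0:ℝ) < t ^ 2 + 1 := by positivity
  have hderiv : ∀ x ∈ Set.Ici (0:ℝ),
      HasDerivAt (fun u => Real.exp (-(u * t)) * Q u)
        (Real.sin (x / 2) ^ 2 * Real.exp (-(x * t))) x := by
    intro x _
    have h3 : HasDerivAt (fun u : ℝ => -(u * t)) (-t) x := by
      simpa using ((hasDerivAt_id x).mul_const t).fun_neg
    have h2 : HasDerivAt (fun u : ℝ => Real.exp (-(u * t)))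
        (-t * Real.exp (-(x * t))) x := by
      simpa [mul_comm] using h3.exp
    have hq : HasDerivAt Q (-((-t * -Real.sin x + Real.cos x) / (2 * (t ^ 2 + 1)))) x := by
      have := (((Real.hasDerivAt_cos x).const_mul (-t)).add (Real.hasDerivAt_sin x)).div_const
        (2 * (t ^ 2 + 1))
      simpa [hQdef, sub_eq_add_neg] using (this.neg.const_add (-(1 / (2 * t))))
    have := h2.fun_mul hq
    refine this.congr_deriv ?_
    have hss : Real.sin (x / 2) ^ 2 = 1 / 2 - Real.cos x / 2 := by
      rw [Real.sin_sq_eq_half_sub, show (2:ℝ) * (x/2) = x by ring]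
    rw [hss]
    simp only [hQdef]
    generalize Real.exp (-(x * t)) = E
    field_simp
    ring
  have h5 : Tendsto (fun u : ℝ => Real.exp (-(u * t))) atTop (𝓝 0) := by
    simpa [Real.rpow_zero, neg_mul, mul_comm] using
      tendsto_rpow_mul_exp_neg_mul_atTop_nhds_zero 0 t ht
  have htend : Tendsto (fun u : ℝ => Real.exp (-(u * t)) * Q u) atTop (𝓝 0) := by
    have hC : ∀ u : ℝ, ‖Real.exp (-(u * t)) * Q u‖
        ≤ (1 / (2 * t) + (t + 1) / (2 * (t ^ 2 + 1))) * Real.exp (-(u * t)) := by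
      intro u
      rw [norm_mul, Real.norm_eq_abs, Real.norm_eq_abs, Real.abs_exp, mul_comm]
      apply mul_le_mul_of_nonneg_right _ (Real.exp_pos _).le
      have h1 : |(-t * Real.cos u + Real.sin u)| ≤ t + 1 := by
        calc |(-t * Real.cos u + Real.sin u)| ≤ |(-t) * Real.cos u| + |Real.sin u| :=
              abs_add_le _ _
          _ ≤ t * 1 + 1 := by
              rw [abs_mul, abs_neg, abs_of_pos ht]
              exact add_le_add (mul_le_mul_of_nonneg_left (Real.abs_cos_le_one u) ht.le)
                (Real.abs_sin_le_one u)
          _ = t + 1 := by ring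
      calc |Q u| ≤ |-(1 / (2 * t))| + |(-t * Real.cos u + Real.sin u) / (2 * (t ^ 2 + 1))| := by
            rw [hQdef]; exact (abs_sub _ _)
        _ ≤ 1 / (2 * t) + (t + 1) / (2 * (t ^ 2 + 1)) := by
            rw [abs_neg, abs_of_pos (show (0:ℝ) < 1 / (2*t) by positivity), abs_div,
              abs_of_pos (show (0:ℝ) < 2 * (t^2+1) by positivity)]
            gcongr
    refine squeeze_zero_norm hC ?_
    simpa using h5.const_mul (1 / (2 * t) + (t + 1) / (2 * (t ^ 2 + 1)))
  have := integral_Ioi_of_hasDerivAt_of_tendsto' hderiv (B1 ht) htend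
  rw [this]
  simp only [hQdef, Real.cos_zero, Real.sin_zero, mul_zero, zero_mul, neg_zero, Real.exp_zero, one_mul]
  field_simp
  ring

lemma hmeas : Measurable (fun u : ℝ => Real.sin (u / 2) ^ 2 / u ^ 2) := by
  fun_prop

lemma C1 : IntegrableOn (fun u : ℝ => Real.sin (u / 2) ^ 2 / u ^ 2) (Set.Ioi 0) := by
  have hsplit : Set.Ioi (0:ℝ) = Set.Ioc 0 1 ∪ Set.Ioi 1 := by
    rw [Set.Ioc_union_Ioi_eq_Ioi]; norm_num
  rw [hsplit]
  apply IntegrableOn.union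
  · apply Integrable.mono' (g := fun _ : ℝ => (1:ℝ)/4)
      (integrableOn_const measure_Ioc_lt_top.ne)
      hmeas.aestronglyMeasurable
    refine (ae_restrict_iff' measurableSet_Ioc).2 (ae_of_all _ fun u hu => ?_)
    rw [Real.norm_eq_abs, abs_of_nonneg (by positivity)]
    have h0 : (0:ℝ) < u := hu.1
    have hsin : Real.sin (u / 2) ≤ u / 2 := Real.sin_le (by positivity)
    have hsin0 : 0 ≤ Real.sin (u / 2) := by
      apply Real.sin_nonneg_of_nonneg_of_le_pi (by positivity)
      calc u / 2 ≤ 1 / 2 := by linarith [hu.2]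
        _ ≤ Real.pi := by linarith [Real.pi_gt_three]
    calc Real.sin (u / 2) ^ 2 / u ^ 2 ≤ (u / 2) ^ 2 / u ^ 2 := by
          gcongr
      _ = 1 / 4 := by field_simp; ring
  · apply Integrable.mono' (g := fun u : ℝ => u ^ (-2:ℝ))
      (integrableOn_Ioi_rpow_of_lt (by norm_num) one_pos)
      hmeas.aestronglyMeasurable
    refine (ae_restrict_iff' measurableSet_Ioi).2 (ae_of_all _ fun u hu => ?_)
    have h1 : (1:ℝ) < u := hu
    have h0 : (0:ℝ) < u := lt_trans one_pos h1
    rw [Real.norm_eq_abs, abs_of_nonneg (by positivity),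
      Real.rpow_neg h0.le, show ((2:ℝ)) = ((2:ℕ):ℝ) by norm_num, Real.rpow_natCast]
    rw [div_eq_mul_inv]
    calc Real.sin (u / 2) ^ 2 * (u ^ 2)⁻¹ ≤ 1 * (u ^ 2)⁻¹ := by
          gcongr
          exact Real.sin_sq_le_one _
      _ = (u ^ 2)⁻¹ := one_mul _

lemma C2 : ∫ u in Set.Ioi (0:ℝ), Real.sin (u / 2) ^ 2 / u ^ 2 = Real.pi / 4 := by
  set φ : ℝ → ℝ → ℝ := fun u t => Real.sin (u / 2) ^ 2 * (t * Real.exp (-(u * t))) with hφ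
  have φmeas : Measurable (fun p : ℝ × ℝ => ENNReal.ofReal (φ p.1 p.2)) := by
    apply ENNReal.measurable_ofReal.comp
    fun_prop
  have key1 : ∀ u ∈ Set.Ioi (0:ℝ),
      (∫⁻ t in Set.Ioi (0:ℝ), ENNReal.ofReal (φ u t))
        = ENNReal.ofReal (Real.sin (u / 2) ^ 2 / u ^ 2) := by
    intro u hu
    have hu0 : (0:ℝ) < u := hu
    have hint : IntegrableOn (fun t => φ u t) (Set.Ioi 0) := (A1 hu0).const_mul _
    rw [← ofReal_integral_eq_lintegral_ofReal hint
      ((ae_restrict_iff' measurableSet_Ioi).2 (ae_of_all _ fun t htp => by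
        simp only [hφ]
        exact mul_nonneg (sq_nonneg _)
          (mul_nonneg (le_of_lt htp) (Real.exp_pos _).le)))]
    congr 1
    rw [hφ]
    simp only
    rw [MeasureTheory.integral_const_mul, A2 hu0]
    field_simp
  have key2 : ∀ t ∈ Set.Ioi (0:ℝ),
      (∫⁻ u in Set.Ioi (0:ℝ), ENNReal.ofReal (φ u t))
        = ENNReal.ofReal (1 / 2 * (1 + t ^ 2)⁻¹) := by
    intro t htp
    have ht0 : (0:ℝ) < t := htp
    have heq : ∀ u : ℝ, φ u t = t * (Real.sin (u / 2) ^ 2 * Real.exp (-(u * t))) := by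
      intro u; rw [hφ]; ring
    have hint : IntegrableOn (fun u => φ u t) (Set.Ioi 0) := by
      have h9 : IntegrableOn (fun u : ℝ => t * (Real.sin (u / 2) ^ 2 * Real.exp (-(u * t))))
        (Set.Ioi 0) := (B1 ht0).const_mul t
      exact h9.congr_fun (fun u _ => (heq u).symm) measurableSet_Ioi
    rw [← ofReal_integral_eq_lintegral_ofReal hint
      (ae_of_all _ fun u => by
        simp only [hφ]
        exact mul_nonneg (sq_nonneg _)
          (mul_nonneg ht0.le (Real.exp_pos _).le))]
    congr 1
    rw [setIntegral_congr_fun measurableSet_Ioi (fun u _ => heq u),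
      MeasureTheory.integral_const_mul, B2 ht0]
    field_simp
    ring
  have hswap : (∫⁻ u in Set.Ioi (0:ℝ), ∫⁻ t in Set.Ioi (0:ℝ), ENNReal.ofReal (φ u t))
      = ∫⁻ t in Set.Ioi (0:ℝ), ∫⁻ u in Set.Ioi (0:ℝ), ENNReal.ofReal (φ u t) :=
    lintegral_lintegral_swap φmeas.aemeasurable
  have lhs : ENNReal.ofReal (∫ u in Set.Ioi (0:ℝ), Real.sin (u / 2) ^ 2 / u ^ 2)
      = ENNReal.ofReal (Real.pi / 4) := by
    rw [ofReal_integral_eq_lintegral_ofReal C1 (ae_of_all _ fun u => by positivity)]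
    rw [← setLIntegral_congr_fun measurableSet_Ioi key1, hswap,
      setLIntegral_congr_fun measurableSet_Ioi key2]
    have hint2 : IntegrableOn (fun t : ℝ => 1 / 2 * (1 + t ^ 2)⁻¹) (Set.Ioi 0) :=
      integrable_inv_one_add_sq.integrableOn.const_mul _
    rw [← ofReal_integral_eq_lintegral_ofReal hint2 (ae_of_all _ fun t => by positivity)]
    congr 1
    rw [MeasureTheory.integral_const_mul, integral_Ioi_inv_one_add_sq, Real.arctan_zero]
    ring
  have h1 : (0:ℝ) ≤ ∫ u in Set.Ioi (0:ℝ), Real.sin (u / 2) ^ 2 / u ^ 2 :=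
    setIntegral_nonneg measurableSet_Ioi fun u _ => by positivity
  have h2 : (0:ℝ) ≤ Real.pi / 4 := by positivity
  exact (ENNReal.ofReal_eq_ofReal_iff h1 h2).1 lhs

end NumVarAux

/-- The limiting variance function of the fluctuation process. -/
noncomputable def fVar (α c a s : ℝ) : ℝ :=
  (4 * s / (a * Real.pi)) * ∫ u in Set.Ioi (0:ℝ),
    Real.sin (u / 2) ^ 2 * (1 - Real.exp (-(2 * c * (u / s) ^ α))) / u ^ 2

lemma keyScaling (α c a s : ℝ) (hα0 : 0 < α) (hc : 0 < c) (ha : 0 < a) (hs : 0 < s)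
    {t : ℝ} (ht : 0 < t) :
    numVar α c a t (s * t ^ (1 / α)) = t ^ (1 / α) * fVar α c a s := by
  set r := t ^ (1/α) with hr'
  have hr : 0 < r := Real.rpow_pos_of_pos ht _
  have hrα : r ^ α = t := by
    rw [hr', ← Real.rpow_mul ht.le, one_div_mul_cancel hα0.ne', Real.rpow_one]
  set k := a / (s * r) with hk'
  have hk : 0 < k := by positivity
  set E : ℝ → ℝ := fun u => Real.exp (-(2 * c * (u / s) ^ α)) with hE'
  set h : ℝ → ℝ := fun u => Real.sin (u / 2) ^ 2 / u ^ 2 with hh'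
  have hIh : IntegrableOn h (Set.Ioi 0) := C1
  have hEmeas : Measurable E := by rw [hE']; fun_prop
  have hnn : ∀ u, 0 ≤ h u := fun u => by rw [hh']; positivity
  have hEnn : ∀ u, 0 ≤ E u := fun u => (Real.exp_pos _).le
  have hEle : ∀ u ∈ Set.Ioi (0:ℝ), E u ≤ 1 := by
    intro u hu
    have hu0 : (0:ℝ) < u := hu
    rw [hE']
    simp only
    rw [Real.exp_le_one_iff, neg_nonpos]
    have h2 : (0:ℝ) ≤ (u/s) ^ α := Real.rpow_nonneg (by positivity) _
    exact mul_nonneg (by positivity) h2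
  have hIEh : IntegrableOn (fun u => E u * h u) (Set.Ioi 0) := by
    apply Integrable.mono' hIh ((hEmeas.mul hmeas).aestronglyMeasurable)
    refine (ae_restrict_iff' measurableSet_Ioi).2 (ae_of_all _ fun u hu => ?_)
    rw [Real.norm_eq_abs]
    change |E u * h u| ≤ h u
    rw [abs_of_nonneg (mul_nonneg (hEnn u) (hnn u))]
    calc E u * h u ≤ 1 * h u := mul_le_mul_of_nonneg_right (hEle u hu) (hnn u)
      _ = h u := one_mul _
  set I2 := ∫ u in Set.Ioi (0:ℝ), E u * h u with hI2'
  -- substitution step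
  have hsub := integral_comp_mul_left_Ioi
    (fun θ => Real.exp (-(2*c*t*(θ/a)^α)) * (Real.cos ((s*r)*θ/a) - 1) / θ^2) 0 hk
  rw [mul_zero, smul_eq_mul] at hsub
  beta_reduce at hsub
  have hptw : ∀ u ∈ Set.Ioi (0:ℝ),
      Real.exp (-(2*c*t*((k*u)/a)^α)) * (Real.cos ((s*r)*(k*u)/a) - 1) / (k*u)^2
        = ((k^2)⁻¹ * (-2)) * (E u * h u) := by
    intro u hu
    have hu0 : (0:ℝ) < u := hu
    have hA : (k*u)/a = (u/s)/r := by rw [hk']; field_simp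
    have hB : 2*c*t*((k*u)/a)^α = 2*c*((u/s)^α) := by
      rw [hA, Real.div_rpow (by positivity) hr.le, hrα]
      field_simp
    have hC : (s*r)*(k*u)/a = u := by rw [hk']; field_simp
    have hD : Real.cos u - 1 = -(2 * Real.sin (u/2)^2) := by
      rw [Real.sin_sq_eq_half_sub, show 2*(u/2) = u by ring]; ring
    rw [hB, hC, hD, hE', hh']
    simp only
    field_simp
  have hsub2 : (∫ x in Set.Ioi (0:ℝ),
      Real.exp (-(2*c*t*((k*x)/a)^α)) * (Real.cos ((s*r)*(k*x)/a) - 1) / (k*x)^2)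
      = ((k^2)⁻¹ * (-2)) * I2 := by
    rw [setIntegral_congr_fun measurableSet_Ioi hptw, MeasureTheory.integral_const_mul]
  have hFint : (∫ θ in Set.Ioi (0:ℝ),
      Real.exp (-(2*c*t*(θ/a)^α)) * (Real.cos ((s*r)*θ/a) - 1) / θ^2)
      = k * (((k^2)⁻¹ * (-2)) * I2) := by
    rw [← hsub2, hsub, ← mul_assoc, mul_inv_cancel₀ hk.ne', one_mul]
  -- fVar side
  have hKint : (∫ u in Set.Ioi (0:ℝ),
      Real.sin (u / 2) ^ 2 * (1 - Real.exp (-(2 * c * (u / s) ^ α))) / u ^ 2)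
      = Real.pi/4 - I2 := by
    have hptw2 : ∀ u ∈ Set.Ioi (0:ℝ),
        Real.sin (u / 2) ^ 2 * (1 - Real.exp (-(2 * c * (u / s) ^ α))) / u ^ 2
          = h u - E u * h u := by
      intro u _
      rw [hE', hh']
      simp only
      ring
    have hhint : ∫ u in Set.Ioi (0:ℝ), h u = Real.pi/4 := by rw [hh']; exact C2
    rw [setIntegral_congr_fun measurableSet_Ioi hptw2, integral_sub hIh hIEh, hhint, ← hI2']
  rw [numVar, fVar, hFint, hKint]
  rw [hk']
  field_simp
  ring

theorem numVar_scaling (α c a t s : ℝ) (hα : α ∈ Set.Ioc (0:ℝ) 2)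
    (hc : 0 < c) (ha : 0 < a) (ht : 0 < t) (hs : 0 < s) :
    numVar α c a t (s * t ^ (1 / α)) = t ^ (1 / α) * fVar α c a s ∧
      fVar α c a s = numVar α c a 1 s := by
  refine ⟨keyScaling α c a s hα.1 hc ha hs ht, ?_⟩
  have h1 := keyScaling α c a s hα.1 hc ha hs one_pos
  rw [Real.one_rpow, mul_one, one_mul] at h1
  exact h1.symm
end
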